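/- arXiv:2401.11299 — 4 statements merged into one kernel-verified Lean document; each statement's English description precedes it below -/
import Mathlib

section
/- For every nonzero multivector M ∈ ⋀X, the inner space of M is contained in the outer space of M: isp(M) ⊆ osp(M). -/
/-!
Setup: `X` is a finite-dimensional real inner product space, `⋀X` its exterior
algebra.  We hypothesize a bilinear form `innE` on the exterior algebra which makes
the wedges of any orthonormal basis of `X` (over increasing index sets) orthonormal
— this characterizes the inner product of the paper — and a bilinear left
contraction `lcontr` adjoint to the wedge product: `⟨M⌟N, L⟩ = ⟨N, M∧L⟩`.
-/

noncomputable section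

open ExteriorAlgebra

/-- The wedge product `v_{i₁} ∧ ⋯ ∧ v_{i_p}` of the vectors `v i`, `i ∈ s`,
taken in increasing order of the indices. -/
def wedgeOf {X : Type*} [AddCommGroup X] [Module ℝ X] {n : ℕ}
    (v : Fin n → X) (s : Finset (Fin n)) : ExteriorAlgebra ℝ X :=
  ((s.sort (· ≤ ·)).map fun i => ι ℝ (v i)).prod


lemma wedgeOf_empty {X : Type*} [AddCommGroup X] [Module ℝ X] {n : ℕ} (v : Fin n → X) :
    wedgeOf v (∅ : Finset (Fin n)) = 1 := by
  simp [wedgeOf]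

lemma wedgeOf_insert' {X : Type*} [AddCommGroup X] [Module ℝ X] {n : ℕ} (v : Fin n → X)
    {i : Fin n} {s : Finset (Fin n)} (h1 : ∀ j ∈ s, i ≤ j) (h2 : i ∉ s) :
    wedgeOf v (insert i s) = ι ℝ (v i) * wedgeOf v s := by
  unfold wedgeOf
  rw [Finset.sort_insert _ h1 h2, List.map_cons, List.prod_cons]

lemma iota_mul_wedgeOf {X : Type*} [AddCommGroup X] [Module ℝ X] {n : ℕ} (v : Fin n → X)
    (i : Fin n) (s : Finset (Fin n)) :
    ι ℝ (v i) * wedgeOf v s =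
      if i ∈ s then 0
      else ((-1 : ℝ)) ^ (s.filter (· < i)).card • wedgeOf v (insert i s) := by
  induction s using Finset.strongInduction with
  | _ s ih =>
  rcases s.eq_empty_or_nonempty with rfl | hs
  · rw [wedgeOf_insert' v (by simp) (by simp), if_neg (Finset.notMem_empty i)]
    simp [wedgeOf_empty]
  · set j := s.min' hs with hjdef
    have hj : j ∈ s := s.min'_mem hs
    have hrepr : wedgeOf v s = ι ℝ (v j) * wedgeOf v (s.erase j) := by
      conv_lhs => rw [← Finset.insert_erase hj]
      exact wedgeOf_insert' v (fun k hk => s.min'_le k (Finset.mem_of_mem_erase hk))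
        (Finset.notMem_erase _ _)
    by_cases hij : i = j
    · subst hij
      rw [hrepr, ← mul_assoc, ι_sq_zero, zero_mul, if_pos hj]
    rcases lt_or_gt_of_ne hij with hlt | hgt
    · have hnotin : i ∉ s := fun h => absurd (s.min'_le i h) (not_le.mpr hlt)
      have hfe : s.filter (· < i) = ∅ := by
        refine Finset.filter_eq_empty_iff.mpr fun k hk => ?_
        exact not_lt.mpr (le_of_lt (lt_of_lt_of_le hlt (s.min'_le k hk)))
      rw [if_neg hnotin, hfe, Finset.card_empty, pow_zero, one_smul,
        wedgeOf_insert' v (fun k hk => le_of_lt (lt_of_lt_of_le hlt (s.min'_le k hk))) hnotin]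
    · have anticomm : ι ℝ (v i) * ι ℝ (v j) = -(ι ℝ (v j) * ι ℝ (v i)) :=
        eq_neg_of_add_eq_zero_left (ι_add_mul_swap (v i) (v j))
      rw [hrepr, ← mul_assoc, anticomm, neg_mul, mul_assoc,
        ih (s.erase j) (Finset.erase_ssubset hj)]
      by_cases hi : i ∈ s
      · rw [if_pos (Finset.mem_erase.mpr ⟨hij, hi⟩), if_pos hi, mul_zero, neg_zero]
      · have hi' : i ∉ s.erase j := fun h => hi (Finset.mem_of_mem_erase h)
        rw [if_neg hi', if_neg hi, mul_smul_comm]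
        have hj2 : j ∉ insert i (s.erase j) := by
          simp only [Finset.mem_insert, Finset.mem_erase]
          rintro (rfl | ⟨h, _⟩) <;> simp_all [lt_irrefl]
        have hle : ∀ k ∈ insert i (s.erase j), j ≤ k := by
          intro k hk
          rcases Finset.mem_insert.mp hk with rfl | hk'
          · exact le_of_lt hgt
          · exact s.min'_le k (Finset.mem_of_mem_erase hk')
        rw [← wedgeOf_insert' v hle hj2]
        have hins : insert j (insert i (s.erase j)) = insert i s := by
          rw [Finset.insert_comm, Finset.insert_erase hj]
        rw [hins]
        have hfilter : s.filter (· < i) = insert j ((s.erase j).filter (· < i)) := by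
          conv_lhs => rw [← Finset.insert_erase hj]
          rw [Finset.filter_insert, if_pos hgt]
        have hjf : j ∉ (s.erase j).filter (· < i) := fun h =>
          Finset.notMem_erase j s (Finset.mem_of_mem_filter j h)
        rw [hfilter, Finset.card_insert_of_notMem hjf, pow_succ, mul_neg_one, neg_smul]

lemma iota_basis_mul_mem {X : Type*} [AddCommGroup X] [Module ℝ X] {n : ℕ} (v : Fin n → X)
    (i : Fin n) {z : ExteriorAlgebra ℝ X}
    (hz : z ∈ Submodule.span ℝ (Set.range (wedgeOf v))) :
    ι ℝ (v i) * z ∈ Submodule.span ℝ (Set.range (wedgeOf v)) := by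
  induction hz using Submodule.span_induction with
  | mem x hx =>
    obtain ⟨s, rfl⟩ := hx
    rw [iota_mul_wedgeOf]
    split
    · exact Submodule.zero_mem _
    · exact Submodule.smul_mem _ _ (Submodule.subset_span ⟨_, rfl⟩)
  | zero => rw [mul_zero]; exact Submodule.zero_mem _
  | add x y _ _ hx hy => rw [mul_add]; exact Submodule.add_mem _ hx hy
  | smul c x _ hx => rw [mul_smul_comm]; exact Submodule.smul_mem _ _ hx

lemma iota_mul_mem {X : Type*} [AddCommGroup X] [Module ℝ X] {n : ℕ}
    (b : Module.Basis (Fin n) ℝ X) (x : X) {z : ExteriorAlgebra ℝ X}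
    (hz : z ∈ Submodule.span ℝ (Set.range (wedgeOf ⇑b))) :
    ι ℝ x * z ∈ Submodule.span ℝ (Set.range (wedgeOf ⇑b)) := by
  rw [show x = ∑ i, b.repr x i • b i from (b.sum_repr x).symm]
  rw [map_sum, Finset.sum_mul]
  refine Submodule.sum_mem _ fun i _ => ?_
  rw [map_smul, smul_mul_assoc]
  exact Submodule.smul_mem _ _ (iota_basis_mul_mem ⇑b i hz)

lemma span_wedgeOf_eq_top {X : Type*} [AddCommGroup X] [Module ℝ X] {n : ℕ}
    (b : Module.Basis (Fin n) ℝ X) :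
    Submodule.span ℝ (Set.range (wedgeOf ⇑b)) = ⊤ := by
  set S := Submodule.span ℝ (Set.range (wedgeOf ⇑b)) with hS
  have h1 : (1 : ExteriorAlgebra ℝ X) ∈ S := by
    rw [← wedgeOf_empty ⇑b]; exact Submodule.subset_span ⟨_, rfl⟩
  have hlist : ∀ (l : List (Fin n)) {z : ExteriorAlgebra ℝ X}, z ∈ S →
      (l.map fun i => ι ℝ (b i)).prod * z ∈ S := by
    intro l
    induction l with
    | nil => intro z hz; simpa using hz
    | cons i l ih =>
      intro z hz
      rw [List.map_cons, List.prod_cons, mul_assoc]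
      exact iota_basis_mul_mem ⇑b i (ih hz)
  have hmul : ∀ a ∈ S, ∀ z ∈ S, a * z ∈ S := by
    intro a ha
    induction ha using Submodule.span_induction with
    | mem x hx =>
      obtain ⟨s, rfl⟩ := hx
      intro z hz
      exact hlist _ hz
    | zero => intro z _; rw [zero_mul]; exact Submodule.zero_mem _
    | add x y _ _ hx hy => intro z hz; rw [add_mul]; exact Submodule.add_mem _ (hx z hz) (hy z hz)
    | smul c x _ hx => intro z hz; rw [smul_mul_assoc]; exact Submodule.smul_mem _ _ (hx z hz)
  rw [eq_top_iff]
  rintro a -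
  induction a using ExteriorAlgebra.induction with
  | algebraMap r => rw [Algebra.algebraMap_eq_smul_one]; exact Submodule.smul_mem _ _ h1
  | ι x => rw [← mul_one (ι ℝ x)]; exact iota_mul_mem b x h1
  | mul a c ha hc => exact hmul a ha c hc
  | add a c ha hc => exact Submodule.add_mem _ ha hc


/-- The inner space `isp M = {v : v ∧ M = 0}`. -/
def isp {X : Type*} [AddCommGroup X] [Module ℝ X]
    (M : ExteriorAlgebra ℝ X) : Submodule ℝ X where
  carrier := {x | ι ℝ x * M = 0}
  add_mem' := by
    intro a b ha hb
    simp only [Set.mem_setOf_eq, map_add, add_mul] at *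
    rw [ha, hb, add_zero]
  zero_mem' := by simp
  smul_mem' := by
    intro c x hx
    simp only [Set.mem_setOf_eq, map_smul, smul_mul_assoc] at *
    rw [hx, smul_zero]

/-- The space `{v : v ⌟ M = 0}`, whose orthogonal complement is the outer space. -/
def ospKer {X : Type*} [NormedAddCommGroup X] [InnerProductSpace ℝ X]
    (lcontr : ExteriorAlgebra ℝ X →ₗ[ℝ] ExteriorAlgebra ℝ X →ₗ[ℝ] ExteriorAlgebra ℝ X)
    (M : ExteriorAlgebra ℝ X) : Submodule ℝ X where
  carrier := {x | lcontr (ι ℝ x) M = 0}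
  add_mem' := by
    intro a b ha hb
    simp only [Set.mem_setOf_eq, map_add, LinearMap.add_apply] at *
    rw [ha, hb, add_zero]
  zero_mem' := by simp
  smul_mem' := by
    intro c x hx
    simp only [Set.mem_setOf_eq, map_smul, LinearMap.smul_apply] at *
    rw [hx, smul_zero]

/-- The outer space `osp M = {v : v ⌟ M = 0}ᗮ`. -/
def osp {X : Type*} [NormedAddCommGroup X] [InnerProductSpace ℝ X]
    (lcontr : ExteriorAlgebra ℝ X →ₗ[ℝ] ExteriorAlgebra ℝ X →ₗ[ℝ] ExteriorAlgebra ℝ X)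
    (M : ExteriorAlgebra ℝ X) : Submodule ℝ X :=
  (ospKer lcontr M)ᗮ

/-- `innE` is the inner product of `⋀X`: for every orthonormal basis of `X`, the
wedges of basis vectors over increasing index sets form an orthonormal family. -/
def InnerOK {X : Type*} [NormedAddCommGroup X] [InnerProductSpace ℝ X]
    (innE : ExteriorAlgebra ℝ X →ₗ[ℝ] ExteriorAlgebra ℝ X →ₗ[ℝ] ℝ) : Prop :=
  ∀ (m : ℕ) (w : OrthonormalBasis (Fin m) ℝ X) (s t : Finset (Fin m)),
    innE (wedgeOf (⇑w) s) (wedgeOf (⇑w) t) = if s = t then 1 else 0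

/-- `lcontr` is the left contraction: `⟨M ⌟ N, L⟩ = ⟨N, M ∧ L⟩`. -/
def ContrOK {X : Type*} [NormedAddCommGroup X] [InnerProductSpace ℝ X]
    (innE : ExteriorAlgebra ℝ X →ₗ[ℝ] ExteriorAlgebra ℝ X →ₗ[ℝ] ℝ)
    (lcontr : ExteriorAlgebra ℝ X →ₗ[ℝ] ExteriorAlgebra ℝ X →ₗ[ℝ] ExteriorAlgebra ℝ X) :
    Prop :=
  ∀ M N L : ExteriorAlgebra ℝ X, innE (lcontr M N) L = innE N (M * L)

/-- For every nonzero multivector `M`, `isp M ⊆ osp M`. -/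
theorem isp_le_osp {X : Type*} [NormedAddCommGroup X] [InnerProductSpace ℝ X]
    [FiniteDimensional ℝ X]
    (innE : ExteriorAlgebra ℝ X →ₗ[ℝ] ExteriorAlgebra ℝ X →ₗ[ℝ] ℝ)
    (lcontr : ExteriorAlgebra ℝ X →ₗ[ℝ] ExteriorAlgebra ℝ X →ₗ[ℝ] ExteriorAlgebra ℝ X)
    (hinn : InnerOK innE) (hc : ContrOK innE lcontr)
    (M : ExteriorAlgebra ℝ X) (hM : M ≠ 0) :
    isp M ≤ osp lcontr M := by
  intro v hv
  have hvM : ι ℝ v * M = 0 := hv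
  show v ∈ (ospKer lcontr M)ᗮ
  rw [Submodule.mem_orthogonal]
  intro u hu
  have huM : lcontr (ι ℝ u) M = 0 := hu
  by_cases hv0 : v = 0
  · simp [hv0]
  have : Nontrivial X := ⟨v, 0, hv0⟩
  set n := Module.finrank ℝ X with hn
  have hnpos : 0 < n := Module.finrank_pos
  haveI : NeZero n := ⟨hnpos.ne'⟩
  have hcard : Module.finrank ℝ X = Fintype.card (Fin n) := by simp [hn]
  set f : Fin n → X := fun _ => ‖v‖⁻¹ • v with hf
  have hnv : ‖v‖ ≠ 0 := norm_ne_zero_iff.mpr hv0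
  have hfo : Orthonormal ℝ (({0} : Set (Fin n)).restrict f) := by
    constructor
    · intro i
      show ‖‖v‖⁻¹ • v‖ = 1
      rw [norm_smul, norm_inv, norm_norm, inv_mul_cancel₀ hnv]
    · intro i j hij
      exact absurd (Subtype.ext ((Set.mem_singleton_iff.mp i.2).trans
        (Set.mem_singleton_iff.mp j.2).symm)) hij
  obtain ⟨w, hw⟩ := hfo.exists_orthonormalBasis_extension_of_card_eq hcard
  have hw0 : w 0 = ‖v‖⁻¹ • v := hw 0 rfl
  have hspan : Submodule.span ℝ (Set.range (wedgeOf ⇑w)) = ⊤ := by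
    have := span_wedgeOf_eq_top w.toBasis
    rwa [OrthonormalBasis.coe_toBasis] at this
  have hMspan : M ∈ Submodule.span ℝ (Set.range (wedgeOf ⇑w)) := by
    rw [hspan]; trivial
  obtain ⟨a, ha⟩ := Submodule.mem_span_range_iff_exists_fun ℝ |>.mp hMspan
  have hA : ∀ t, innE M (wedgeOf ⇑w t) = a t := by
    intro t
    rw [← ha, map_sum, LinearMap.sum_apply, Finset.sum_eq_single t]
    · simp [hinn n w t t]
    · intro s _ hst
      simp [hinn n w s t, hst]
    · intro h; exact absurd (Finset.mem_univ t) h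
  have hw0M : ι ℝ (w 0) * M = 0 := by
    rw [hw0, map_smul, smul_mul_assoc, hvM, smul_zero]
  have hfilter0 : ∀ s : Finset (Fin n), (s.filter (· < (0 : Fin n))).card = 0 := by
    intro s
    rw [Finset.card_eq_zero, Finset.filter_eq_empty_iff]
    intro k _
    simp [Fin.lt_def]
  have hA0 : ∀ t, (0 : Fin n) ∉ t → a t = 0 := by
    intro t h0t
    have h : innE (ι ℝ (w 0) * M) (wedgeOf ⇑w (insert 0 t)) = 0 := by
      rw [hw0M]; simp
    rw [← ha, Finset.mul_sum, map_sum, LinearMap.sum_apply, Finset.sum_eq_single t] at h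
    · rw [mul_smul_comm, iota_mul_wedgeOf, if_neg h0t, hfilter0, pow_zero, one_smul,
        map_smul, LinearMap.smul_apply, hinn n w _ _, if_pos rfl] at h
      simpa using h
    · intro s _ hst
      rw [mul_smul_comm, iota_mul_wedgeOf]
      by_cases h0s : (0 : Fin n) ∈ s
      · rw [if_pos h0s]; simp
      · rw [if_neg h0s]
        have hne : insert (0 : Fin n) s ≠ insert 0 t := by
          intro he
          apply hst
          rw [← Finset.erase_insert h0s, ← Finset.erase_insert h0t, he]
        simp [hinn n w (insert 0 s) (insert 0 t), hne]
    · intro h; exact absurd (Finset.mem_univ t) h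
  have hex : ∃ t, a t ≠ 0 := by
    by_contra h
    push_neg at h
    apply hM
    rw [← ha]
    simp [h]
  obtain ⟨t, hat⟩ := hex
  have h0t : (0 : Fin n) ∈ t := by
    by_contra h0
    exact hat (hA0 t h0)
  have hfin : innE M (ι ℝ u * wedgeOf ⇑w (t.erase 0)) = 0 := by
    rw [← hc (ι ℝ u) M (wedgeOf ⇑w (t.erase 0)), huM]
    simp
  have hexp : ∑ i, (inner ℝ (w i) u : ℝ) • w i = u := w.sum_repr' u
  rw [← hexp, map_sum, Finset.sum_mul, map_sum, Finset.sum_eq_single 0] at hfin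
  · rw [map_smul, smul_mul_assoc, map_smul, iota_mul_wedgeOf,
      if_neg (Finset.notMem_erase _ _), hfilter0, pow_zero, one_smul,
      Finset.insert_erase h0t, hA t] at hfin
    have hc0 : (inner ℝ (w 0) u : ℝ) = 0 := by
      rcases mul_eq_zero.mp hfin with h | h
      · exact h
      · exact absurd h hat
    rw [hw0, real_inner_smul_left] at hc0
    rcases mul_eq_zero.mp hc0 with h | h
    · exact absurd h (inv_ne_zero hnv)
    · rw [real_inner_comm] at h
      exact h
  · intro i _ hi0
    rw [map_smul, smul_mul_assoc, map_smul, iota_mul_wedgeOf]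
    by_cases hie : i ∈ t.erase 0
    · rw [if_pos hie]; simp
    · rw [if_neg hie]
      have h0ni : (0 : Fin n) ∉ insert i (t.erase 0) := by
        simp only [Finset.mem_insert]
        rintro (h | h)
        · exact hi0 h.symm
        · exact Finset.notMem_erase _ _ h
      rw [map_smul, hA, hA0 _ h0ni]
      simp
  · intro h; exact absurd (Finset.mem_univ 0) h


end
end

section
/- For every M ∈ ⋀X, osp(M) is the smallest subspace of X whose exterior algebra contains M: M lies in the subalgebra ⋀(osp(M)) of ⋀X generated by osp(M), and if V ⊆ X is any subspace with M ∈ ⋀V, then osp(M) ⊆ V. -/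
/-!
Setup: `X` is a finite-dimensional real inner product space, `⋀X` its exterior
algebra.  We hypothesize a bilinear form `innE` on the exterior algebra which makes
the wedges of any orthonormal basis of `X` (over increasing index sets) orthonormal
— this characterizes the inner product of the paper — and a bilinear left
contraction `lcontr` adjoint to the wedge product: `⟨M⌟N, L⟩ = ⟨N, M∧L⟩`.
-/

noncomputable section

open ExteriorAlgebra

/-- The subalgebra `⋀V` of `⋀X` generated by a subspace `V` of `X`. -/
def extSub {X : Type*} [AddCommGroup X] [Module ℝ X] (V : Submodule ℝ X) :
    Subalgebra ℝ (ExteriorAlgebra ℝ X) :=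
  Algebra.adjoin ℝ ((ι ℝ : X →ₗ[ℝ] ExteriorAlgebra ℝ X) '' (V : Set X))

namespace OspAux

variable {X : Type*} [AddCommGroup X] [Module ℝ X] {n : ℕ}

/-- product of `ι (v i)` over a list of indices -/
def pm (v : Fin n → X) (l : List (Fin n)) : ExteriorAlgebra ℝ X :=
  (l.map fun i => ι ℝ (v i)).prod

lemma pm_nil (v : Fin n → X) : pm v [] = 1 := rfl

lemma pm_cons (v : Fin n → X) (a : Fin n) (l : List (Fin n)) :
    pm v (a :: l) = ι ℝ (v a) * pm v l := by
  simp [pm]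

lemma wedgeOf_eq_pm (v : Fin n → X) (s : Finset (Fin n)) :
    wedgeOf v s = pm v (s.sort (· ≤ ·)) := rfl

lemma ι_mul_swap (x y : X) : ι ℝ x * ι ℝ y = -(ι ℝ y * ι ℝ x) := by
  have h := ι_add_mul_swap (R := ℝ) x y
  rw [eq_neg_iff_add_eq_zero]
  exact h


lemma ι_mul_pm_of_mem (v : Fin n → X) (i : Fin n) :
    ∀ l : List (Fin n), i ∈ l → ι ℝ (v i) * pm v l = 0 := by
  intro l
  induction l with
  | nil => simp
  | cons a t ih =>
    intro hmem
    rw [pm_cons, ← mul_assoc]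
    rcases eq_or_ne i a with rfl | h
    · rw [ι_sq_zero, zero_mul]
    · have ht : i ∈ t := by
        rcases List.mem_cons.mp hmem with h' | h'
        · exact absurd h' h
        · exact h'
      rw [ι_mul_swap (v i) (v a), neg_mul, mul_assoc, ih ht, mul_zero, neg_zero]

lemma ι_mul_pm_orderedInsert (v : Fin n → X) (i : Fin n) :
    ∀ l : List (Fin n), ∃ ε : ℝ, (ε = 1 ∨ ε = -1) ∧
      ι ℝ (v i) * pm v l = ε • pm v (l.orderedInsert (· ≤ ·) i) := by
  intro l
  induction l with
  | nil => exact ⟨1, Or.inl rfl, by simp [List.orderedInsert, pm, pm_cons]⟩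
  | cons a t ih =>
    by_cases hle : i ≤ a
    · refine ⟨1, Or.inl rfl, ?_⟩
      simp [List.orderedInsert, hle, pm_cons]
    · obtain ⟨ε, hε, heq⟩ := ih
      refine ⟨-ε, by rcases hε with h | h <;> simp [h], ?_⟩
      have : (a :: t).orderedInsert (· ≤ ·) i = a :: t.orderedInsert (· ≤ ·) i := by
        simp [List.orderedInsert, hle]
      rw [this, pm_cons, pm_cons, ← mul_assoc, ι_mul_swap (v i) (v a), neg_mul,
        mul_assoc, heq, mul_smul_comm, neg_smul]

lemma sort_insert_eq (i : Fin n) (s : Finset (Fin n)) (h : i ∉ s) :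
    (insert i s).sort (· ≤ ·) = (s.sort (· ≤ ·)).orderedInsert (· ≤ ·) i := by
  apply List.Perm.eq_of_pairwise' (Finset.pairwise_sort _ _)
    (List.Pairwise.orderedInsert _ _ (Finset.pairwise_sort _ _))
  have h1 : (↑((insert i s).sort (· ≤ ·)) : Multiset (Fin n)) = ↑(i :: s.sort (· ≤ ·)) := by
    rw [Finset.sort_eq, Finset.insert_val, Multiset.ndinsert_of_notMem h,
      ← Finset.sort_eq s (· ≤ ·), ← Multiset.cons_coe]
  have h2 : ((insert i s).sort (· ≤ ·)).Perm (i :: s.sort (· ≤ ·)) :=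
    Multiset.coe_eq_coe.mp h1
  exact h2.trans (List.perm_orderedInsert _ _ _).symm

lemma ι_mul_wedgeOf_of_not_mem (v : Fin n → X) {i : Fin n} {s : Finset (Fin n)} (h : i ∉ s) :
    ∃ ε : ℝ, (ε = 1 ∨ ε = -1) ∧
      ι ℝ (v i) * wedgeOf v s = ε • wedgeOf v (insert i s) := by
  obtain ⟨ε, hε, heq⟩ := ι_mul_pm_orderedInsert v i (s.sort (· ≤ ·))
  exact ⟨ε, hε, by rw [wedgeOf_eq_pm, wedgeOf_eq_pm, sort_insert_eq i s h, heq]⟩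

lemma ι_mul_wedgeOf_of_mem (v : Fin n → X) {i : Fin n} {s : Finset (Fin n)} (h : i ∈ s) :
    ι ℝ (v i) * wedgeOf v s = 0 :=
  ι_mul_pm_of_mem v i _ ((Finset.mem_sort _).mpr h)

lemma wedgeOf_empty (v : Fin n → X) : wedgeOf v ∅ = 1 := by
  simp [wedgeOf]

end OspAux

namespace OspAux

variable {X : Type*} [AddCommGroup X] [Module ℝ X] {n : ℕ}

/-- span of wedges over subsets of `S` -/
def WS (v : Fin n → X) (S : Finset (Fin n)) : Submodule ℝ (ExteriorAlgebra ℝ X) :=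
  Submodule.span ℝ (wedgeOf v '' {s : Finset (Fin n) | s ⊆ S})

lemma wedge_mem_WS (v : Fin n → X) {S s : Finset (Fin n)} (h : s ⊆ S) :
    wedgeOf v s ∈ WS v S :=
  Submodule.subset_span ⟨s, h, rfl⟩

lemma one_mem_WS (v : Fin n → X) (S : Finset (Fin n)) : 1 ∈ WS v S := by
  have := wedge_mem_WS v (S := S) (s := ∅) (Finset.empty_subset S)
  rwa [wedgeOf_empty] at this

lemma ι_mul_mem_WS (v : Fin n → X) {S : Finset (Fin n)} {i : Fin n} (hi : i ∈ S)
    {p : ExteriorAlgebra ℝ X} (hp : p ∈ WS v S) : ι ℝ (v i) * p ∈ WS v S := by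
  induction hp using Submodule.span_induction with
  | mem x hx =>
    obtain ⟨s, hs, rfl⟩ := hx
    by_cases hmem : i ∈ s
    · rw [ι_mul_wedgeOf_of_mem v hmem]; exact Submodule.zero_mem _
    · obtain ⟨ε, _, heq⟩ := ι_mul_wedgeOf_of_not_mem v hmem
      rw [heq]
      exact Submodule.smul_mem _ _ (wedge_mem_WS v (Finset.insert_subset hi hs))
  | zero => rw [mul_zero]; exact Submodule.zero_mem _
  | add x y _ _ hx hy => rw [mul_add]; exact Submodule.add_mem _ hx hy
  | smul c x _ hx => rw [mul_smul_comm]; exact Submodule.smul_mem _ _ hx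

lemma ιx_mul_mem_WS (v : Fin n → X) {S : Finset (Fin n)} {x : X}
    (hx : x ∈ Submodule.span ℝ (v '' ↑S)) {p : ExteriorAlgebra ℝ X} (hp : p ∈ WS v S) :
    ι ℝ x * p ∈ WS v S := by
  induction hx using Submodule.span_induction with
  | mem y hy =>
    obtain ⟨i, hi, rfl⟩ := hy
    exact ι_mul_mem_WS v (Finset.mem_coe.mp hi) hp
  | zero => rw [map_zero, zero_mul]; exact Submodule.zero_mem _
  | add y z _ _ hy hz => rw [map_add, add_mul]; exact Submodule.add_mem _ hy hz
  | smul c y _ hy => rw [map_smul, smul_mul_assoc]; exact Submodule.smul_mem _ _ hy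

lemma pm_mul_mem_WS (v : Fin n → X) {S : Finset (Fin n)} {l : List (Fin n)}
    (hl : ∀ i ∈ l, i ∈ S) {p : ExteriorAlgebra ℝ X} (hp : p ∈ WS v S) :
    pm v l * p ∈ WS v S := by
  induction l with
  | nil => rw [pm_nil, one_mul]; exact hp
  | cons a t ih =>
    rw [pm_cons, mul_assoc]
    exact ι_mul_mem_WS v (hl a List.mem_cons_self) (ih fun i hi => hl i (List.mem_cons_of_mem a hi))

lemma mul_mem_WS (v : Fin n → X) {S : Finset (Fin n)} {p q : ExteriorAlgebra ℝ X}
    (hp : p ∈ WS v S) (hq : q ∈ WS v S) : p * q ∈ WS v S := by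
  induction hp using Submodule.span_induction with
  | mem x hx =>
    obtain ⟨s, hs, rfl⟩ := hx
    exact pm_mul_mem_WS v (fun i hi => hs ((Finset.mem_sort _).mp hi)) hq
  | zero => rw [zero_mul]; exact Submodule.zero_mem _
  | add x y _ _ hx hy => rw [add_mul]; exact Submodule.add_mem _ hx hy
  | smul c x _ hx => rw [smul_mul_assoc]; exact Submodule.smul_mem _ _ hx

lemma WS_univ_eq_top (v : Fin n → X) (hv : Submodule.span ℝ (Set.range v) = ⊤) :
    WS v (Finset.univ) = ⊤ := by
  rw [eq_top_iff]
  intro x _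
  show x ∈ WS v Finset.univ
  induction x using ExteriorAlgebra.induction with
  | algebraMap r =>
    have : (algebraMap ℝ (ExteriorAlgebra ℝ X)) r = r • 1 := by
      rw [Algebra.algebraMap_eq_smul_one]
    rw [this]
    exact Submodule.smul_mem _ _ (one_mem_WS v _)
  | ι y =>
    have hy : y ∈ Submodule.span ℝ (v '' ↑(Finset.univ : Finset (Fin n))) := by
      rw [Finset.coe_univ, Set.image_univ, hv]; trivial
    have := ιx_mul_mem_WS v hy (one_mem_WS v Finset.univ)
    rwa [mul_one] at this
  | mul a b ha hb => exact mul_mem_WS v (ha trivial) (hb trivial)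
  | add a b ha hb => exact Submodule.add_mem _ (ha trivial) (hb trivial)

end OspAux

namespace OspAux

variable {X : Type*} [NormedAddCommGroup X] [InnerProductSpace ℝ X] [FiniteDimensional ℝ X]
  {m : ℕ}

lemma exists_wedge_basis (innE : ExteriorAlgebra ℝ X →ₗ[ℝ] ExteriorAlgebra ℝ X →ₗ[ℝ] ℝ)
    (hinn : InnerOK innE) (b : OrthonormalBasis (Fin m) ℝ X) :
    ∃ B : Module.Basis (Finset (Fin m)) ℝ (ExteriorAlgebra ℝ X),
      (∀ s, B s = wedgeOf (⇑b) s) ∧ (∀ N t, innE N (wedgeOf (⇑b) t) = B.repr N t) := by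
  have hsum : ∀ (g : Finset (Fin m) → ℝ) (t : Finset (Fin m)),
      innE (∑ s : Finset (Fin m), g s • wedgeOf (⇑b) s) (wedgeOf (⇑b) t) = g t := by
    intro g t
    rw [map_sum, LinearMap.sum_apply]
    have : ∀ s : Finset (Fin m),
        (innE (g s • wedgeOf (⇑b) s)) (wedgeOf (⇑b) t) = if s = t then g s else 0 := by
      intro s
      rw [map_smul, LinearMap.smul_apply, smul_eq_mul, hinn m b s t]
      by_cases h : s = t <;> simp [h]
    rw [Finset.sum_congr rfl fun s _ => this s, Finset.sum_ite_eq' Finset.univ t g]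
    simp
  have hinj : LinearIndependent ℝ (wedgeOf (⇑b)) := by
    rw [Fintype.linearIndependent_iff]
    intro g hg t
    have := hsum g t
    rw [hg] at this
    simpa using this.symm
  have hspan : ⊤ ≤ Submodule.span ℝ (Set.range (wedgeOf (⇑b))) := by
    have hv : Submodule.span ℝ (Set.range (⇑b)) = ⊤ := by
      have := b.toBasis.span_eq
      rwa [OrthonormalBasis.coe_toBasis] at this
    have := WS_univ_eq_top (⇑b) hv
    rw [WS] at this
    have himg : wedgeOf (⇑b) '' {s : Finset (Fin m) | s ⊆ Finset.univ} =
        Set.range (wedgeOf (⇑b)) := by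
      rw [show {s : Finset (Fin m) | s ⊆ Finset.univ} = Set.univ by
        ext s; simp [Finset.subset_univ], Set.image_univ]
    rw [himg] at this
    rw [this]
  refine ⟨Module.Basis.mk hinj hspan, fun s => Module.Basis.mk_apply hinj hspan s, fun N t => ?_⟩
  conv_lhs => rw [← (Module.Basis.mk hinj hspan).sum_repr N]
  have : ∀ s, ((Module.Basis.mk hinj hspan).repr N) s • (Module.Basis.mk hinj hspan) s
      = ((Module.Basis.mk hinj hspan).repr N) s • wedgeOf (⇑b) s := by
    intro s; rw [Module.Basis.mk_apply]
  rw [Finset.sum_congr rfl fun s _ => this s]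
  exact hsum _ t

end OspAux

namespace OspAux

variable {X : Type*} [NormedAddCommGroup X] [InnerProductSpace ℝ X] [FiniteDimensional ℝ X]

lemma exists_adapted (U : Submodule ℝ X) :
    ∃ (b : OrthonormalBasis (Fin (Module.finrank ℝ X)) ℝ X)
      (S : Finset (Fin (Module.finrank ℝ X))),
      (∀ i ∈ S, b i ∈ U) ∧ (∀ i ∉ S, b i ∈ Uᗮ) ∧
      (U : Set X) ⊆ (Submodule.span ℝ (⇑b '' ↑S) : Submodule ℝ X) ∧
      (Uᗮ : Set X) ⊆ (Submodule.span ℝ (⇑b '' ↑(Sᶜ)) : Submodule ℝ X) := by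
  set n := Module.finrank ℝ X with hn
  set k := Module.finrank ℝ U with hkdef
  have hk : k ≤ n := Submodule.finrank_le U
  set bU := stdOrthonormalBasis ℝ U with hbU
  set f : Fin n → X := fun i => if h : (i : ℕ) < k then ((bU ⟨(i : ℕ), h⟩ : U) : X) else 0
    with hf
  set sSet : Set (Fin n) := {i | (i : ℕ) < k} with hsSet
  have hon : Orthonormal ℝ (sSet.restrict f) := by
    constructor
    · rintro ⟨i, hi⟩
      have hi' : (i : ℕ) < k := hi
      simp only [Set.restrict_apply, hf, dif_pos hi']
      show ‖(if h : (i : ℕ) < k then ((bU ⟨(i : ℕ), h⟩ : U) : X) else 0)‖ = 1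
      rw [dif_pos hi']
      rw [Submodule.norm_coe]
      exact bU.orthonormal.1 _
    · rintro ⟨i, hi⟩ ⟨j, hj⟩ hne
      have hi' : (i : ℕ) < k := hi
      have hj' : (j : ℕ) < k := hj
      simp only [Set.restrict_apply, hf, dif_pos hi', dif_pos hj']
      show inner ℝ (if h : (i : ℕ) < k then ((bU ⟨(i : ℕ), h⟩ : U) : X) else 0)
        (if h : (j : ℕ) < k then ((bU ⟨(j : ℕ), h⟩ : U) : X) else 0) = 0
      rw [dif_pos hi', dif_pos hj']
      rw [← Submodule.coe_inner]
      apply bU.orthonormal.2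
      intro hcontra
      apply hne
      rw [Fin.mk.injEq] at hcontra
      exact Subtype.ext (Fin.ext hcontra)
  obtain ⟨b, hb⟩ := hon.exists_orthonormalBasis_extension_of_card_eq
    (by rw [Fintype.card_fin])
  set S : Finset (Fin n) := Finset.univ.filter (fun i => (i : ℕ) < k) with hS
  have hmemS : ∀ i : Fin n, i ∈ S ↔ (i : ℕ) < k := by
    intro i; simp [hS]
  have hbi : ∀ i ∈ S, b i ∈ U := by
    intro i hi
    have hi' : (i : ℕ) < k := (hmemS i).mp hi
    rw [hb i hi']
    simp only [hf, dif_pos hi']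
    exact SetLike.coe_mem _
  have hUspan : (U : Set X) ⊆ (Submodule.span ℝ (⇑b '' ↑S) : Submodule ℝ X) := by
    intro x hx
    have h1 := congrArg (U.subtype) (bU.sum_repr ⟨x, hx⟩)
    rw [map_sum] at h1
    simp only [map_smul, Submodule.subtype_apply] at h1
    have h2 : x = ∑ j : Fin k, bU.repr ⟨x, hx⟩ j • ((bU j : U) : X) := h1.symm
    rw [h2]
    apply Submodule.sum_mem
    intro j _
    apply Submodule.smul_mem
    apply Submodule.subset_span
    refine ⟨⟨(j : ℕ), lt_of_lt_of_le j.2 hk⟩, ?_, ?_⟩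
    · rw [Finset.mem_coe, hmemS]; exact j.2
    · rw [hb _ j.2]
      simp only [hf, dif_pos (show ((⟨(j : ℕ), lt_of_lt_of_le j.2 hk⟩ : Fin n) : ℕ) < k from j.2)]
      rfl
  have hbc : ∀ i ∉ S, b i ∈ Uᗮ := by
    intro i hi
    rw [Submodule.mem_orthogonal]
    intro x hxU
    have hx : x ∈ Submodule.span ℝ (⇑b '' ↑S) := hUspan hxU
    have hle : Submodule.span ℝ (⇑b '' ↑S) ≤ (ℝ ∙ (b i))ᗮ := by
      rw [Submodule.span_le]
      rintro _ ⟨j, hj, rfl⟩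
      rw [SetLike.mem_coe, Submodule.mem_orthogonal_singleton_iff_inner_left]
      exact b.orthonormal.2 (fun h => hi (h ▸ Finset.mem_coe.mp hj))
    have := hle hx
    rw [Submodule.mem_orthogonal_singleton_iff_inner_left] at this
    exact this
  refine ⟨b, S, hbi, hbc, hUspan, ?_⟩
  intro x hx
  have hx' : ∀ u ∈ U, (inner ℝ u x : ℝ) = 0 :=
    (Submodule.mem_orthogonal U x).mp (SetLike.mem_coe.mp hx)
  have h1 := b.sum_repr x
  rw [← Finset.sum_compl_add_sum S (fun i => b.repr x i • b i)] at h1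
  have h2 : ∀ i ∈ S, b.repr x i • b i = 0 := by
    intro i hi
    rw [b.repr_apply_apply, hx' (b i) (hbi i hi), zero_smul]
  rw [Finset.sum_eq_zero h2, add_zero] at h1
  rw [← h1]
  apply Submodule.sum_mem
  intro i hi
  exact Submodule.smul_mem _ _ (Submodule.subset_span ⟨i, Finset.mem_coe.mpr hi, rfl⟩)

end OspAux

namespace OspAux

lemma mem_ospKer_iff {X : Type*} [NormedAddCommGroup X] [InnerProductSpace ℝ X]
    (lcontr : ExteriorAlgebra ℝ X →ₗ[ℝ] ExteriorAlgebra ℝ X →ₗ[ℝ] ExteriorAlgebra ℝ X)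
    (M : ExteriorAlgebra ℝ X) (x : X) :
    x ∈ ospKer lcontr M ↔ lcontr (ι ℝ x) M = 0 := Iff.rfl

lemma wedge_mem_extSub {X : Type*} [AddCommGroup X] [Module ℝ X] {n : ℕ}
    (v : Fin n → X) (U : Submodule ℝ X) {s : Finset (Fin n)}
    (h : ∀ i ∈ s, v i ∈ U) : wedgeOf v s ∈ extSub U := by
  apply Subalgebra.list_prod_mem
  intro x hx
  obtain ⟨i, hi, rfl⟩ := List.mem_map.mp hx
  exact Algebra.subset_adjoin ⟨v i, h i ((Finset.mem_sort _).mp hi), rfl⟩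

end OspAux


/-- `osp M` is the smallest subspace of `X` whose exterior algebra
contains `M`. -/
theorem osp_smallest {X : Type*} [NormedAddCommGroup X] [InnerProductSpace ℝ X]
    [FiniteDimensional ℝ X]
    (innE : ExteriorAlgebra ℝ X →ₗ[ℝ] ExteriorAlgebra ℝ X →ₗ[ℝ] ℝ)
    (lcontr : ExteriorAlgebra ℝ X →ₗ[ℝ] ExteriorAlgebra ℝ X →ₗ[ℝ] ExteriorAlgebra ℝ X)
    (hinn : InnerOK innE) (hc : ContrOK innE lcontr)
    (M : ExteriorAlgebra ℝ X) :
    M ∈ extSub (osp lcontr M) ∧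
      ∀ V : Submodule ℝ X, M ∈ extSub V → osp lcontr M ≤ V := by
  constructor
  · -- claim 1 : M ∈ ⋀(osp M)
    obtain ⟨b, S, hbi, hbc, hUspan, hUperp⟩ := OspAux.exists_adapted (ospKer lcontr M)ᗮ
    obtain ⟨B, hB, hcoeff⟩ := OspAux.exists_wedge_basis innE hinn b
    have hrepr : ∀ s : Finset (Fin (Module.finrank ℝ X)), ¬ s ⊆ S → B.repr M s = 0 := by
      intro s hs
      obtain ⟨j, hjs, hjS⟩ := Finset.not_subset.mp hs
      have hjK : b j ∈ ospKer lcontr M := by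
        have h1 := hbc j hjS
        rwa [Submodule.orthogonal_orthogonal] at h1
      have hlc : lcontr (ι ℝ (b j)) M = 0 := (OspAux.mem_ospKer_iff lcontr M _).mp hjK
      obtain ⟨ε, hε, heq⟩ :=
        OspAux.ι_mul_wedgeOf_of_not_mem (⇑b) (s := s.erase j) (Finset.notMem_erase j s)
      rw [Finset.insert_erase hjs] at heq
      have h0 : innE M (ι ℝ (b j) * wedgeOf (⇑b) (s.erase j)) = 0 := by
        rw [← hc, hlc]
        simp
      rw [heq, map_smul, smul_eq_mul] at h0
      have hε0 : ε ≠ 0 := by rcases hε with h | h <;> rw [h] <;> norm_num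
      have hz : innE M (wedgeOf (⇑b) s) = 0 := (mul_eq_zero.mp h0).resolve_left hε0
      rw [← hcoeff]
      exact hz
    have hM := B.sum_repr M
    simp only [hB] at hM
    have hgoal : (∑ s : Finset (Fin (Module.finrank ℝ X)), B.repr M s • wedgeOf (⇑b) s) ∈
        extSub (ospKer lcontr M)ᗮ := by
      apply Subalgebra.sum_mem
      intro s _
      by_cases hsS : s ⊆ S
      · exact Subalgebra.smul_mem _
          (OspAux.wedge_mem_extSub (⇑b) _ fun i hi => hbi i (hsS hi)) _
      · rw [hrepr s hsS, zero_smul]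
        exact Subalgebra.zero_mem _
    rw [hM] at hgoal
    exact hgoal
  · -- claim 2 : minimality
    intro V hMV
    have key : Vᗮ ≤ ospKer lcontr M := by
      intro v hv
      rw [OspAux.mem_ospKer_iff]
      obtain ⟨b, S, hbi, hbc, hVsub, hVperp⟩ := OspAux.exists_adapted V
      obtain ⟨B, hB, hcoeff⟩ := OspAux.exists_wedge_basis innE hinn b
      have hMW : M ∈ OspAux.WS (⇑b) S := by
        induction hMV using Algebra.adjoin_induction with
        | mem x hx =>
          obtain ⟨y, hyV, rfl⟩ := hx
          have hy : y ∈ Submodule.span ℝ (⇑b '' ↑S) := hVsub hyV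
          have h1 := OspAux.ιx_mul_mem_WS (⇑b) hy (OspAux.one_mem_WS (⇑b) S)
          rwa [mul_one] at h1
        | algebraMap r =>
          rw [Algebra.algebraMap_eq_smul_one]
          exact Submodule.smul_mem _ _ (OspAux.one_mem_WS (⇑b) S)
        | add x y _ _ hx hy => exact Submodule.add_mem _ hx hy
        | mul x y _ _ hx hy => exact OspAux.mul_mem_WS (⇑b) hx hy
      have hsupp : ∀ r : Finset (Fin (Module.finrank ℝ X)), ¬ r ⊆ S → B.repr M r = 0 := by
        have himg : ⇑B '' {s : Finset (Fin (Module.finrank ℝ X)) | s ⊆ S} =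
            wedgeOf (⇑b) '' {s | s ⊆ S} := Set.image_congr fun s _ => hB s
        have hM' : M ∈ Submodule.span ℝ (⇑B '' {s | s ⊆ S}) := by
          rw [himg]; exact hMW
        have hss := (B.mem_span_image).mp hM'
        intro r hr
        by_contra hne
        exact hr (hss (Finsupp.mem_support_iff.mpr hne))
      have hzx : ∀ x ∈ Submodule.span ℝ (⇑b '' ↑(Sᶜ)), ∀ t,
          innE M (ι ℝ x * wedgeOf (⇑b) t) = 0 := by
        intro x hx
        induction hx using Submodule.span_induction with
        | mem y hy =>
          intro t
          obtain ⟨j, hj, rfl⟩ := hy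
          have hjS : j ∉ S := by simpa using Finset.mem_coe.mp hj
          by_cases hjt : j ∈ t
          · rw [OspAux.ι_mul_wedgeOf_of_mem (⇑b) hjt, map_zero]
          · obtain ⟨ε, _, heq⟩ := OspAux.ι_mul_wedgeOf_of_not_mem (⇑b) hjt
            rw [heq, map_smul, smul_eq_mul, hcoeff,
              hsupp _ (fun hsub => hjS (hsub (Finset.mem_insert_self j t))), mul_zero]
        | zero => intro t; rw [map_zero, zero_mul, map_zero]
        | add y z _ _ hy hz' => intro t; rw [map_add, add_mul, map_add, hy t, hz' t, add_zero]
        | smul c y _ hy => intro t; rw [map_smul, smul_mul_assoc, map_smul, hy t, smul_zero]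
      rw [B.ext_elem_iff]
      intro t
      rw [← hcoeff, map_zero, Finsupp.zero_apply, hc]
      exact hzx v (hVperp hv) t
    have h2 := Submodule.orthogonal_le key
    rwa [Submodule.orthogonal_orthogonal] at h2


end
end

section
/- For M, N ∈ ⋀X: (i) if osp(N)^⊥ ∩ isp(M) ≠ {0}, then M⌟N = 0; (ii) conversely, if M ≠ 0, N ≠ 0 and M⌟N = 0, then isp(N)^⊥ ∩ osp(M) ≠ {0}. -/
/-!
Setup: `X` is a finite-dimensional real inner product space, `⋀X` its exterior
algebra.  We hypothesize a bilinear form `innE` on the exterior algebra which makes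
the wedges of any orthonormal basis of `X` (over increasing index sets) orthonormal
— this characterizes the inner product of the paper — and a bilinear left
contraction `lcontr` adjoint to the wedge product: `⟨M⌟N, L⟩ = ⟨N, M∧L⟩`.
-/

noncomputable section

open ExteriorAlgebra

namespace PPerp
variable {X : Type*} [AddCommGroup X] [Module ℝ X] {n : ℕ}

/-- The sign `(-1)^{#{j ∈ s : j < i}}`. -/
def eps (i : Fin n) (s : Finset (Fin n)) : ℝ :=
  (-1 : ℝ) ^ ((s.sort (· ≤ ·)).countP fun j => decide (j < i))

lemma eps_eq_or (i : Fin n) (s : Finset (Fin n)) : eps i s = 1 ∨ eps i s = -1 := by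
  rcases Nat.even_or_odd ((s.sort (· ≤ ·)).countP fun j => decide (j < i)) with h | h
  · exact Or.inl (h.neg_one_pow)
  · exact Or.inr (h.neg_one_pow)

lemma eps_ne_zero (i : Fin n) (s : Finset (Fin n)) : eps i s ≠ 0 := by
  rcases eps_eq_or i s with h | h <;> rw [h] <;> norm_num

lemma iota_anticomm (a b : X) : ι ℝ a * ι ℝ b = -(ι ℝ b * ι ℝ a) :=
  eq_neg_of_add_eq_zero_left (ι_add_mul_swap a b)

lemma iota_mul_list_of_mem (w : Fin n → X) (i : Fin n) :
    ∀ l : List (Fin n), i ∈ l →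
      ι ℝ (w i) * (l.map fun j => ι ℝ (w j)).prod = 0 := by
  intro l
  induction l with
  | nil => intro h; simp at h
  | cons j l ih =>
    intro h
    rcases List.mem_cons.mp h with rfl | h
    · rw [List.map_cons, List.prod_cons, ← mul_assoc, ι_sq_zero, zero_mul]
    · rw [List.map_cons, List.prod_cons, ← mul_assoc, iota_anticomm, neg_mul, mul_assoc,
        ih h, mul_zero, neg_zero]

lemma iota_mul_list (w : Fin n → X) (i : Fin n) :
    ∀ l : List (Fin n), l.Pairwise (· ≤ ·) → i ∉ l →
      ι ℝ (w i) * (l.map fun j => ι ℝ (w j)).prod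
        = ((-1 : ℝ) ^ (l.countP fun j => decide (j < i))) •
            ((l.orderedInsert (· ≤ ·) i).map fun j => ι ℝ (w j)).prod := by
  intro l
  induction l with
  | nil => intro _ _; simp
  | cons j l ih =>
    intro hs hi
    have hij : i ≠ j := fun h => hi (h ▸ List.mem_cons_self)
    rcases le_or_gt i j with h | h
    · -- i ≤ j, insert at front, no sign
      have hc : (List.countP (fun j => decide (j < i)) (j :: l)) = 0 := by
        apply List.countP_eq_zero.mpr
        intro a ha
        simp only [decide_eq_true_eq]
        rcases List.mem_cons.mp ha with rfl | ha
        · exact not_lt.mpr h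
        · exact not_lt.mpr (le_trans h ((List.pairwise_cons.mp hs).1 a ha))
      rw [hc, List.orderedInsert, if_pos h]
      simp [List.prod_cons, mul_assoc]
    · -- j < i
      have hs' : l.Pairwise (· ≤ ·) := (List.pairwise_cons.mp hs).2
      have hi' : i ∉ l := fun h' => hi (List.mem_cons_of_mem j h')
      rw [List.map_cons, List.prod_cons, ← mul_assoc, iota_anticomm, neg_mul, mul_assoc,
        ih hs' hi', List.orderedInsert, if_neg (not_le.mpr h)]
      have hcnt : (List.countP (fun j => decide (j < i)) (j :: l))
          = (List.countP (fun j => decide (j < i)) l) + 1 := by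
        rw [List.countP_cons_of_pos]
        simp [h]
      rw [hcnt, List.map_cons, List.prod_cons, pow_succ, mul_smul_comm]
      rw [← neg_smul]
      congr 1
      ring




lemma sort_insert' {i : Fin n} {s : Finset (Fin n)} (h : i ∉ s) :
    (insert i s).sort (· ≤ ·) = (s.sort (· ≤ ·)).orderedInsert (· ≤ ·) i := by
  apply List.Perm.eq_of_pairwise' (Finset.pairwise_sort _ _)
    (List.Pairwise.orderedInsert i _ (Finset.pairwise_sort _ _))
  apply Multiset.coe_eq_coe.mp
  have h1 : (((s.sort (· ≤ ·)).orderedInsert (· ≤ ·) i : List (Fin n)) : Multiset (Fin n))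
      = ↑(i :: s.sort (· ≤ ·)) := Multiset.coe_eq_coe.mpr (List.perm_orderedInsert _ _ _)
  rw [Finset.sort_eq, h1]
  simp only [Finset.insert_val_of_notMem h, ← Multiset.cons_coe, Finset.sort_eq]


lemma wedgeOf_empty (w : Fin n → X) : wedgeOf w ∅ = 1 := by
  simp [wedgeOf]

lemma iota_mul_wedge_of_mem (w : Fin n → X) {i : Fin n} {s : Finset (Fin n)} (h : i ∈ s) :
    ι ℝ (w i) * wedgeOf w s = 0 :=
  iota_mul_list_of_mem w i _ ((Finset.mem_sort (· ≤ ·)).mpr h)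

lemma iota_mul_wedge_of_not_mem (w : Fin n → X) {i : Fin n} {s : Finset (Fin n)} (h : i ∉ s) :
    ι ℝ (w i) * wedgeOf w s = eps i s • wedgeOf w (insert i s) := by
  unfold wedgeOf eps
  rw [iota_mul_list w i _ (Finset.pairwise_sort _ _) (fun hm => h ((Finset.mem_sort _).mp hm)),
    sort_insert' h]

lemma list_mul_wedge (w : Fin n → X) :
    ∀ l : List (Fin n), l.Nodup → ∀ y : Finset (Fin n),
      ∃ c : ℝ, (l.map fun j => ι ℝ (w j)).prod * wedgeOf w y = c • wedgeOf w (l.toFinset ∪ y) ∧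
        ((∀ i ∈ l, i ∉ y) → (c = 1 ∨ c = -1)) ∧ (¬ (∀ i ∈ l, i ∉ y) → c = 0) := by
  intro l
  induction l with
  | nil =>
    intro _ y
    refine ⟨1, by simp, fun _ => Or.inl rfl, fun h => absurd (by simp) h⟩
  | cons i l ih =>
    intro hnd y
    have hil : i ∉ l := (List.nodup_cons.mp hnd).1
    obtain ⟨c, hc, hc1, hc0⟩ := ih (List.nodup_cons.mp hnd).2 y
    rw [List.map_cons, List.prod_cons, mul_assoc, hc, mul_smul_comm]
    by_cases hiy : i ∈ l.toFinset ∪ y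
    · refine ⟨0, ?_, ?_, fun _ => rfl⟩
      · rw [iota_mul_wedge_of_mem w hiy, smul_zero, zero_smul]
      · intro hd
        exfalso
        rcases Finset.mem_union.mp hiy with h' | h'
        · exact hil (List.mem_toFinset.mp h')
        · exact hd i (List.mem_cons_self) h'
    · have hiy' : i ∉ y := fun h' => hiy (Finset.mem_union_right _ h')
      rw [iota_mul_wedge_of_not_mem w hiy, smul_smul]
      refine ⟨c * eps i (l.toFinset ∪ y), ?_, ?_, ?_⟩
      · rw [List.toFinset_cons, Finset.insert_union]
      · intro hd
        have h1 := hc1 (fun j hj => hd j (List.mem_cons_of_mem i hj))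
        rcases h1 with h1 | h1 <;> rcases eps_eq_or i (l.toFinset ∪ y) with h2 | h2 <;>
          rw [h1, h2] <;> norm_num
      · intro hd
        have : ¬ (∀ j ∈ l, j ∉ y) := by
          intro hall
          exact hd (fun j hj hjy => by
            rcases List.mem_cons.mp hj with rfl | hj'
            · exact hiy' hjy
            · exact hall j hj' hjy)
        rw [hc0 this, zero_mul]

lemma wedge_mul_wedge (w : Fin n → X) (s y : Finset (Fin n)) :
    ∃ c : ℝ, wedgeOf w s * wedgeOf w y = c • wedgeOf w (s ∪ y) ∧
      ((∀ i ∈ s, i ∉ y) → (c = 1 ∨ c = -1)) ∧ (¬ (∀ i ∈ s, i ∉ y) → c = 0) := by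
  obtain ⟨c, hc, hc1, hc0⟩ := list_mul_wedge w (s.sort (· ≤ ·)) (Finset.sort_nodup _ _) y
  rw [Finset.sort_toFinset] at hc
  refine ⟨c, hc, fun hd => hc1 (fun i hi => hd i ((Finset.mem_sort _).mp hi)),
    fun hd => hc0 (fun hall => hd (fun i hi => hall i ((Finset.mem_sort _).mpr hi)))⟩




section InnerLayer

variable {X : Type*} [NormedAddCommGroup X] [InnerProductSpace ℝ X]
variable {m : ℕ} (w : OrthonormalBasis (Fin m) ℝ X)

/-- The span of the basis wedges is a left ideal for multiplication by `ι (w i)`. -/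
lemma iota_mul_mem_span (i : Fin m) {p : ExteriorAlgebra ℝ X}
    (hp : p ∈ Submodule.span ℝ (Set.range (wedgeOf ⇑w))) :
    ι ℝ (w i) * p ∈ Submodule.span ℝ (Set.range (wedgeOf ⇑w)) := by
  induction hp using Submodule.span_induction with
  | mem x hx =>
    obtain ⟨s, rfl⟩ := hx
    by_cases h : i ∈ s
    · rw [iota_mul_wedge_of_mem ⇑w h]; exact Submodule.zero_mem _
    · rw [iota_mul_wedge_of_not_mem ⇑w h]
      exact Submodule.smul_mem _ _ (Submodule.subset_span ⟨_, rfl⟩)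
  | zero => rw [mul_zero]; exact Submodule.zero_mem _
  | add x y _ _ hx hy => rw [mul_add]; exact Submodule.add_mem _ hx hy
  | smul c x _ hx => rw [mul_smul_comm]; exact Submodule.smul_mem _ _ hx

lemma iota_mul_mem_span' (x : X) {p : ExteriorAlgebra ℝ X}
    (hp : p ∈ Submodule.span ℝ (Set.range (wedgeOf ⇑w))) :
    ι ℝ x * p ∈ Submodule.span ℝ (Set.range (wedgeOf ⇑w)) := by
  have hx := w.sum_repr' x
  rw [← hx, map_sum, Finset.sum_mul]
  apply Submodule.sum_mem
  intro i _
  rw [map_smul, smul_mul_assoc]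
  exact Submodule.smul_mem _ _ (iota_mul_mem_span w i hp)

lemma mul_mem_span {p q : ExteriorAlgebra ℝ X}
    (hp : p ∈ Submodule.span ℝ (Set.range (wedgeOf ⇑w)))
    (hq : q ∈ Submodule.span ℝ (Set.range (wedgeOf ⇑w))) :
    p * q ∈ Submodule.span ℝ (Set.range (wedgeOf ⇑w)) := by
  induction hp using Submodule.span_induction with
  | mem x hx =>
    obtain ⟨s, rfl⟩ := hx
    have : ∀ l : List (Fin m), (l.map fun j => ι ℝ (w j)).prod * q
        ∈ Submodule.span ℝ (Set.range (wedgeOf ⇑w)) := by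
      intro l
      induction l with
      | nil => simpa using hq
      | cons j l ih =>
        rw [List.map_cons, List.prod_cons, mul_assoc]
        exact iota_mul_mem_span w j ih
    exact this _
  | zero => rw [zero_mul]; exact Submodule.zero_mem _
  | add x y _ _ hx hy => rw [add_mul]; exact Submodule.add_mem _ hx hy
  | smul c x _ hx => rw [smul_mul_assoc]; exact Submodule.smul_mem _ _ hx

lemma wedge_span (P : ExteriorAlgebra ℝ X) :
    P ∈ Submodule.span ℝ (Set.range (wedgeOf ⇑w)) := by
  induction P using ExteriorAlgebra.induction with
  | algebraMap r =>
    rw [Algebra.algebraMap_eq_smul_one]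
    rw [show (1 : ExteriorAlgebra ℝ X) = wedgeOf ⇑w ∅ from (wedgeOf_empty ⇑w).symm]
    exact Submodule.smul_mem _ _ (Submodule.subset_span ⟨_, rfl⟩)
  | ι x =>
    have h1 : (1 : ExteriorAlgebra ℝ X) ∈ Submodule.span ℝ (Set.range (wedgeOf ⇑w)) := by
      rw [← wedgeOf_empty ⇑w]; exact Submodule.subset_span ⟨_, rfl⟩
    simpa using iota_mul_mem_span' w x h1
  | mul a b ha hb => exact mul_mem_span w ha hb
  | add a b ha hb => exact Submodule.add_mem _ ha hb

variable (innE : ExteriorAlgebra ℝ X →ₗ[ℝ] ExteriorAlgebra ℝ X →ₗ[ℝ] ℝ)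

lemma wedge_li (hinn : InnerOK innE) : LinearIndependent ℝ (wedgeOf ⇑w) := by
  rw [linearIndependent_iff']
  intro s g h t ht
  have h2 : innE (∑ u ∈ s, g u • wedgeOf ⇑w u) (wedgeOf ⇑w t) = 0 := by rw [h]; simp
  rw [map_sum] at h2
  simp only [LinearMap.coe_sum, Finset.sum_apply, map_smul, LinearMap.smul_apply] at h2
  have h3 : ∀ u ∈ s, g u • (innE (wedgeOf ⇑w u)) (wedgeOf ⇑w t) = if u = t then g u else 0 := by
    intro u _
    rw [hinn m w u t]
    by_cases hut : u = t <;> simp [hut]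
  rw [Finset.sum_congr rfl h3, Finset.sum_ite_eq' s t g, if_pos ht] at h2
  exact h2

/-- The wedges over an orthonormal basis form a basis of the exterior algebra. -/
def wedgeBasis (hinn : InnerOK innE) : Module.Basis (Finset (Fin m)) ℝ (ExteriorAlgebra ℝ X) :=
  Module.Basis.mk (wedge_li w innE hinn) (fun P _ => wedge_span w P)

lemma wedgeBasis_apply (hinn : InnerOK innE) (s : Finset (Fin m)) :
    wedgeBasis w innE hinn s = wedgeOf ⇑w s :=
  Module.Basis.mk_apply _ _ _

lemma innE_coeff (hinn : InnerOK innE) (P : ExteriorAlgebra ℝ X) (t : Finset (Fin m)) :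
    innE P (wedgeOf ⇑w t) = (wedgeBasis w innE hinn).repr P t := by
  have hb := Module.Basis.ext (b := wedgeBasis w innE hinn)
    (f₁ := innE.flip (wedgeOf ⇑w t))
    (f₂ := (Finsupp.lapply t).comp ((wedgeBasis w innE hinn).repr : ExteriorAlgebra ℝ X →ₗ[ℝ] _))
    (fun s => by
      simp only [LinearMap.flip_apply, LinearMap.coe_comp, Function.comp_apply,
        Finsupp.lapply_apply, LinearEquiv.coe_coe, Module.Basis.repr_self]
      rw [wedgeBasis_apply w innE hinn s, hinn m w s t, Finsupp.single_apply])
  exact LinearMap.congr_fun hb P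

lemma coeff_innE (hinn : InnerOK innE) (P : ExteriorAlgebra ℝ X) (t : Finset (Fin m)) :
    innE (wedgeOf ⇑w t) P = (wedgeBasis w innE hinn).repr P t := by
  have hb := Module.Basis.ext (b := wedgeBasis w innE hinn)
    (f₁ := innE (wedgeOf ⇑w t))
    (f₂ := (Finsupp.lapply t).comp ((wedgeBasis w innE hinn).repr : ExteriorAlgebra ℝ X →ₗ[ℝ] _))
    (fun s => by
      simp only [LinearMap.coe_comp, Function.comp_apply,
        Finsupp.lapply_apply, LinearEquiv.coe_coe, Module.Basis.repr_self]
      rw [wedgeBasis_apply w innE hinn s, hinn m w t s, Finsupp.single_apply]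
      rcases eq_or_ne s t with rfl | h
      · simp
      · simp [h, Ne.symm h])
  exact LinearMap.congr_fun hb P

include w in
lemma innE_comm (hinn : InnerOK innE) (P Q : ExteriorAlgebra ℝ X) : innE P Q = innE Q P := by
  have hb := Module.Basis.ext (b := wedgeBasis w innE hinn)
    (f₁ := innE P) (f₂ := innE.flip P)
    (fun t => by
      simp only [LinearMap.flip_apply, wedgeBasis_apply]
      rw [innE_coeff w innE hinn P t, coeff_innE w innE hinn P t])
  exact LinearMap.congr_fun hb Q

lemma innE_ext (hinn : InnerOK innE) {P Q : ExteriorAlgebra ℝ X}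
    (h : ∀ t, innE P (wedgeOf ⇑w t) = innE Q (wedgeOf ⇑w t)) : P = Q := by
  apply (wedgeBasis w innE hinn).ext_elem
  intro t
  rw [← innE_coeff w innE hinn P t, ← innE_coeff w innE hinn Q t]
  exact h t

lemma innE_ext0 (hinn : InnerOK innE) {P : ExteriorAlgebra ℝ X}
    (h : ∀ t, innE P (wedgeOf ⇑w t) = 0) : P = 0 := by
  apply innE_ext w innE hinn
  intro t
  rw [h t]
  simp

end InnerLayer



section ContrLayer

variable {X : Type*} [NormedAddCommGroup X] [InnerProductSpace ℝ X]
variable {m : ℕ} (w : OrthonormalBasis (Fin m) ℝ X)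
variable (innE : ExteriorAlgebra ℝ X →ₗ[ℝ] ExteriorAlgebra ℝ X →ₗ[ℝ] ℝ)
variable (lcontr : ExteriorAlgebra ℝ X →ₗ[ℝ] ExteriorAlgebra ℝ X →ₗ[ℝ] ExteriorAlgebra ℝ X)
variable (hinn : InnerOK innE) (hc : ContrOK innE lcontr)

include w hinn hc in
lemma lcontr_mul (A B P : ExteriorAlgebra ℝ X) :
    lcontr (A * B) P = lcontr B (lcontr A P) := by
  apply innE_ext w innE hinn
  intro t
  rw [hc, hc, hc, mul_assoc]

omit w hinn hc in
lemma lcontr_smul_arg (c : ℝ) (A P : ExteriorAlgebra ℝ X) :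
    lcontr (c • A) P = c • lcontr A P := by
  rw [map_smul, LinearMap.smul_apply]

include hinn hc in
lemma lcontr_iota_wedge (i : Fin m) (s : Finset (Fin m)) :
    lcontr (ι ℝ (w i)) (wedgeOf ⇑w s) =
      if i ∈ s then eps i (s.erase i) • wedgeOf ⇑w (s.erase i) else 0 := by
  apply innE_ext w innE hinn
  intro t
  rw [hc]
  by_cases hit : i ∈ t
  · rw [iota_mul_wedge_of_mem ⇑w hit, map_zero]
    by_cases his : i ∈ s
    · rw [if_pos his]
      have hne : s.erase i ≠ t := fun h => (Finset.notMem_erase i s) (h ▸ hit)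
      rw [map_smul, LinearMap.smul_apply, hinn m w (s.erase i) t, if_neg hne]
      simp
    · rw [if_neg his]; simp
  · rw [iota_mul_wedge_of_not_mem ⇑w hit, map_smul, hinn m w s (insert i t)]
    by_cases his : i ∈ s
    · rw [if_pos his, map_smul, LinearMap.smul_apply, hinn m w (s.erase i) t]
      by_cases hst : s = insert i t
      · have h1 : s.erase i = t := by rw [hst, Finset.erase_insert hit]
        rw [if_pos hst, if_pos h1, ← h1]
      · have h1 : s.erase i ≠ t := fun h => hst (by rw [← h, Finset.insert_erase his])
        rw [if_neg hst, if_neg h1]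
        simp
    · have hst : s ≠ insert i t := fun h => his (h ▸ Finset.mem_insert_self i t)
      rw [if_neg hst, if_neg his]
      simp

include w hinn hc in
lemma lcontr_one_left (P : ExteriorAlgebra ℝ X) : lcontr 1 P = P := by
  apply innE_ext w innE hinn
  intro t
  rw [hc, one_mul]

end ContrLayer

section PartOne

variable {X : Type*} [NormedAddCommGroup X] [InnerProductSpace ℝ X] [FiniteDimensional ℝ X]
variable (innE : ExteriorAlgebra ℝ X →ₗ[ℝ] ExteriorAlgebra ℝ X →ₗ[ℝ] ℝ)
variable (lcontr : ExteriorAlgebra ℝ X →ₗ[ℝ] ExteriorAlgebra ℝ X →ₗ[ℝ] ExteriorAlgebra ℝ X)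

lemma eps_bot {m : ℕ} (z : Fin m) (hz : (z : ℕ) = 0) (s : Finset (Fin m)) : eps z s = 1 := by
  unfold eps
  rw [List.countP_eq_zero.mpr, pow_zero]
  intro j _
  simp only [decide_eq_true_eq]
  intro hj
  rw [Fin.lt_def, hz] at hj
  exact Nat.not_lt_zero _ hj

lemma exists_onb_head {e : X} (he : ‖e‖ = 1) (hpos : 0 < Module.finrank ℝ X) :
    ∃ w : OrthonormalBasis (Fin (Module.finrank ℝ X)) ℝ X, w ⟨0, hpos⟩ = e := by
  have hcard : Module.finrank ℝ X = Fintype.card (Fin (Module.finrank ℝ X)) := by simp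
  have horth : Orthonormal ℝ
      (Set.restrict {(⟨0, hpos⟩ : Fin (Module.finrank ℝ X))} fun _ => e) := by
    constructor
    · intro i; exact he
    · intro i j hij
      exact absurd (Subtype.ext ((Set.mem_singleton_iff.mp i.2).trans
        (Set.mem_singleton_iff.mp j.2).symm)) hij
  obtain ⟨w, hw⟩ := horth.exists_orthonormalBasis_extension_of_card_eq hcard
  exact ⟨w, hw _ rfl⟩

lemma eq_iota_mul_lcontr (hinn : InnerOK innE) (hc : ContrOK innE lcontr)
    {e : X} (he : ‖e‖ = 1) (M : ExteriorAlgebra ℝ X) (hM : ι ℝ e * M = 0) :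
    M = ι ℝ e * lcontr (ι ℝ e) M := by
  have hnt : Nontrivial X := by
    refine nontrivial_of_ne e 0 (fun h => ?_)
    rw [h, norm_zero] at he; norm_num at he
  have hpos : 0 < Module.finrank ℝ X := Module.finrank_pos
  obtain ⟨w, hw⟩ := exists_onb_head he hpos
  set z : Fin (Module.finrank ℝ X) := ⟨0, hpos⟩ with hzdef
  have hz : (z : ℕ) = 0 := rfl
  have hM' : ι ℝ (w z) * M = 0 := by rw [hw]; exact hM
  apply innE_ext w innE hinn
  intro t
  rw [← hw]
  by_cases hzt : z ∈ t
  · have key : innE (ι ℝ (w z) * lcontr (ι ℝ (w z)) M) (wedgeOf ⇑w t)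
        = innE M (wedgeOf ⇑w t) := by
      rw [innE_comm w innE hinn (ι ℝ (w z) * lcontr (ι ℝ (w z)) M) (wedgeOf ⇑w t), ← hc,
        lcontr_iota_wedge w innE lcontr hinn hc z t]
      rw [if_pos hzt, eps_bot z hz, one_smul]
      rw [innE_comm w innE hinn (wedgeOf ⇑w (t.erase z)) (lcontr (ι ℝ (w z)) M), hc,
        iota_mul_wedge_of_not_mem ⇑w (Finset.notMem_erase z t), eps_bot z hz, one_smul,
        Finset.insert_erase hzt]
    rw [key]
  · have key : innE (ι ℝ (w z) * lcontr (ι ℝ (w z)) M) (wedgeOf ⇑w t) = 0 := by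
      rw [innE_comm w innE hinn (ι ℝ (w z) * lcontr (ι ℝ (w z)) M) (wedgeOf ⇑w t), ← hc,
        lcontr_iota_wedge w innE lcontr hinn hc z t, if_neg hzt]
      simp
    have hMt : innE M (wedgeOf ⇑w t) = 0 := by
      have h3 := hc (ι ℝ (w z)) (wedgeOf ⇑w (insert z t)) M
      rw [hM', map_zero] at h3
      rw [lcontr_iota_wedge w innE lcontr hinn hc z (insert z t),
        if_pos (Finset.mem_insert_self z t), Finset.erase_insert hzt, eps_bot z hz,
        one_smul] at h3
      rw [innE_comm w innE hinn M (wedgeOf ⇑w t), h3]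
    rw [hMt, key]

lemma part_one (hinn : InnerOK innE) (hc : ContrOK innE lcontr)
    (M N : ExteriorAlgebra ℝ X)
    (hne : (osp lcontr N)ᗮ ⊓ isp M ≠ ⊥) : lcontr M N = 0 := by
  obtain ⟨v, hv, hv0⟩ := (Submodule.ne_bot_iff _).mp hne
  have hvN : lcontr (ι ℝ v) N = 0 := by
    have h1 : v ∈ (ospKer lcontr N)ᗮᗮ := hv.1
    rw [Submodule.orthogonal_orthogonal] at h1
    exact h1
  have hvM : ι ℝ v * M = 0 := hv.2
  set e : X := ‖v‖⁻¹ • v with hedef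
  have he : ‖e‖ = 1 := norm_smul_inv_norm hv0
  have hMe : ι ℝ e * M = 0 := by
    rw [hedef, map_smul, smul_mul_assoc, hvM, smul_zero]
  have hNe : lcontr (ι ℝ e) N = 0 := by
    rw [hedef, map_smul, map_smul, LinearMap.smul_apply, hvN, smul_zero]
  calc lcontr M N = lcontr (ι ℝ e * lcontr (ι ℝ e) M) N := by
        rw [← eq_iota_mul_lcontr innE lcontr hinn hc he M hMe]
    _ = lcontr (lcontr (ι ℝ e) M) (lcontr (ι ℝ e) N) := by
        have w := stdOrthonormalBasis ℝ X
        exact lcontr_mul w innE lcontr hinn hc _ _ _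
    _ = 0 := by rw [hNe, map_zero]

end PartOne


section PartTwo

variable {X : Type*} [NormedAddCommGroup X] [InnerProductSpace ℝ X] [FiniteDimensional ℝ X]
variable (innE : ExteriorAlgebra ℝ X →ₗ[ℝ] ExteriorAlgebra ℝ X →ₗ[ℝ] ℝ)
variable (lcontr : ExteriorAlgebra ℝ X →ₗ[ℝ] ExteriorAlgebra ℝ X →ₗ[ℝ] ExteriorAlgebra ℝ X)

lemma exists_onb_adapted (I : Submodule ℝ X) :
    ∃ w : OrthonormalBasis (Fin (Module.finrank ℝ X)) ℝ X,
      (∀ i : Fin (Module.finrank ℝ X), (i : ℕ) < Module.finrank ℝ I → w i ∈ I) ∧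
      (∀ x ∈ I, ∃ c : Fin (Module.finrank ℝ I) → ℝ,
        x = ∑ a, c a • w ⟨(a : ℕ), lt_of_lt_of_le a.2 (Submodule.finrank_le I)⟩) := by
  classical
  set n := Module.finrank ℝ X with hn
  set k := Module.finrank ℝ I with hk
  have hkn : k ≤ n := Submodule.finrank_le I
  set u := stdOrthonormalBasis ℝ I with hu
  set v : Fin n → X := fun i => if h : (i : ℕ) < k then (u ⟨(i : ℕ), h⟩ : X) else 0 with hv
  have hvdef : ∀ (i : Fin n) (h : (i : ℕ) < k), v i = (u ⟨(i : ℕ), h⟩ : X) := by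
    intro i h
    simp only [hv]
    exact dif_pos h
  have hcard : Module.finrank ℝ X = Fintype.card (Fin n) := by simp [hn]
  have horth : Orthonormal ℝ (Set.restrict {i : Fin n | (i : ℕ) < k} v) := by
    constructor
    · rintro ⟨i, hi⟩
      rw [Set.restrict, Set.domRestrict_apply, hvdef i hi, Submodule.norm_coe]
      exact u.orthonormal.1 _
    · rintro ⟨i, hi⟩ ⟨j, hj⟩ hij
      rw [Set.restrict, Set.domRestrict_apply, Set.domRestrict_apply, hvdef i hi, hvdef j hj,
        ← Submodule.coe_inner]
      apply u.orthonormal.2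
      intro heq
      have h2 : (i : ℕ) = (j : ℕ) := by simpa using heq
      exact hij (Subtype.ext (Fin.ext h2))
  obtain ⟨w, hw⟩ := horth.exists_orthonormalBasis_extension_of_card_eq hcard
  refine ⟨w, ?_, ?_⟩
  · intro i hi
    rw [hw i hi, hvdef i hi]
    exact (u ⟨(i : ℕ), hi⟩).2
  · intro x hx
    refine ⟨fun a => u.repr ⟨x, hx⟩ a, ?_⟩
    have hx2 : x = ∑ i, (u.repr ⟨x, hx⟩ i) • ((u i : X)) := by
      have hsum := congrArg (Subtype.val) (u.sum_repr ⟨x, hx⟩)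
      rw [Submodule.coe_sum] at hsum
      simp only [SetLike.val_smul] at hsum
      exact hsum.symm
    refine hx2.trans ?_
    apply Finset.sum_congr rfl
    intro a _
    congr 1
    have hmem : ((⟨(a : ℕ), lt_of_lt_of_le a.2 hkn⟩ : Fin n) : ℕ) < k := a.2
    rw [hw _ hmem, hvdef _ hmem]


lemma part_two (hinn : InnerOK innE) (hc : ContrOK innE lcontr)
    (M N : ExteriorAlgebra ℝ X) (hM : M ≠ 0) (hN : N ≠ 0)
    (h0 : lcontr M N = 0) : (isp N)ᗮ ⊓ osp lcontr M ≠ ⊥ := by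
  classical
  intro hbot
  set n := Module.finrank ℝ X with hn
  set I := isp N with hI
  set k := Module.finrank ℝ I with hk
  have htop : I ⊔ ospKer lcontr M = ⊤ := by
    have h1 : (I ⊔ ospKer lcontr M)ᗮ = ⊥ := by
      rw [← Submodule.inf_orthogonal]
      exact hbot
    exact (Submodule.orthogonal_eq_bot_iff).mp h1
  obtain ⟨w, hwI, hwRep⟩ := exists_onb_adapted I
  set K : Finset (Fin n) := Finset.univ.filter (fun i => (i : ℕ) < k) with hK
  set b := wedgeBasis w innE hinn with hb
  -- Every nonvanishing coefficient of N contains all of K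
  have hNcoeff : ∀ y : Finset (Fin n), ¬ K ⊆ y → innE N (wedgeOf ⇑w y) = 0 := by
    intro y hy
    obtain ⟨i, hiK, hiy⟩ := Finset.not_subset.mp hy
    have hiI : w i ∈ I := hwI i (by simpa [hK] using hiK)
    have hiN : ι ℝ (w i) * N = 0 := hiI
    have h3 := hc (ι ℝ (w i)) (wedgeOf ⇑w (insert i y)) N
    rw [hiN, map_zero] at h3
    rw [lcontr_iota_wedge w innE lcontr hinn hc i (insert i y),
      if_pos (Finset.mem_insert_self i y), Finset.erase_insert hiy, map_smul,
      LinearMap.smul_apply] at h3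
    have h4 : innE (wedgeOf ⇑w y) N = 0 := by
      rcases smul_eq_zero.mp h3 with h | h
      · exact absurd h (eps_ne_zero i y)
      · exact h
    rw [innE_comm w innE hinn N (wedgeOf ⇑w y)]
    exact h4
  -- M has a nonzero "pure I" coefficient
  have hMpure : ∃ t, t ⊆ K ∧ innE M (wedgeOf ⇑w t) ≠ 0 := by
    by_contra hcon
    push_neg at hcon
    set supp : Finset (Finset (Fin n)) :=
      Finset.univ.filter (fun s => innE M (wedgeOf ⇑w s) ≠ 0) with hsupp
    have hsne : supp.Nonempty := by
      by_contra hemp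
      rw [Finset.not_nonempty_iff_eq_empty] at hemp
      apply hM
      apply innE_ext0 w innE hinn
      intro t
      by_contra ht
      have hmem : t ∈ supp := by
        rw [hsupp, Finset.mem_filter]
        exact ⟨Finset.mem_univ t, ht⟩
      rw [hemp] at hmem
      simp at hmem
    obtain ⟨s₀, hs₀mem, hs₀min⟩ := Finset.exists_min_image supp (fun s => (s \ K).card) hsne
    have hms₀ : innE M (wedgeOf ⇑w s₀) ≠ 0 := by
      rw [hsupp, Finset.mem_filter] at hs₀mem
      exact hs₀mem.2
    have hs₀K : ¬ s₀ ⊆ K := fun h => hms₀ (hcon s₀ h)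
    obtain ⟨i, his₀, hiK⟩ := Finset.not_subset.mp hs₀K
    have hwiT : w i ∈ I ⊔ ospKer lcontr M := htop ▸ Submodule.mem_top
    obtain ⟨h, hhI, a, haA, hha⟩ := Submodule.mem_sup.mp hwiT
    have haM : lcontr (ι ℝ a) M = 0 := haA
    set y₀ := s₀.erase i with hy₀
    have hiy₀ : i ∉ y₀ := Finset.notMem_erase i s₀
    have hsmall : ∀ s : Finset (Fin n), (s \ K).card < (s₀ \ K).card →
        innE M (wedgeOf ⇑w s) = 0 := by
      intro s hs
      by_contra hne
      have hmem : s ∈ supp := by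
        rw [hsupp, Finset.mem_filter]
        exact ⟨Finset.mem_univ s, hne⟩
      exact absurd (hs₀min s hmem) (not_le.mpr hs)
    have hL : innE (lcontr (ι ℝ (w i)) M) (wedgeOf ⇑w y₀)
        = eps i y₀ * innE M (wedgeOf ⇑w s₀) := by
      rw [hc, iota_mul_wedge_of_not_mem ⇑w hiy₀, Finset.insert_erase his₀, map_smul,
        smul_eq_mul]
    have hR : innE (lcontr (ι ℝ h) M) (wedgeOf ⇑w y₀) = 0 := by
      rw [hc]
      obtain ⟨c, hrep⟩ := hwRep h hhI
      rw [hrep, map_sum, Finset.sum_mul, map_sum]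
      apply Finset.sum_eq_zero
      intro a' _
      set j : Fin n := ⟨(a' : ℕ), lt_of_lt_of_le a'.2 (Submodule.finrank_le I)⟩ with hj
      have hjK : j ∈ K := by
        rw [hK, Finset.mem_filter]
        exact ⟨Finset.mem_univ j, a'.2⟩
      rw [map_smul, smul_mul_assoc, map_smul, smul_eq_mul]
      by_cases hjy : j ∈ y₀
      · rw [iota_mul_wedge_of_mem ⇑w hjy, map_zero, mul_zero]
      · rw [iota_mul_wedge_of_not_mem ⇑w hjy, map_smul, smul_eq_mul]
        have hz : innE M (wedgeOf ⇑w (insert j y₀)) = 0 := by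
          apply hsmall
          rw [Finset.insert_sdiff_of_mem _ hjK, hy₀, Finset.erase_sdiff_comm]
          exact Finset.card_erase_lt_of_mem (Finset.mem_sdiff.mpr ⟨his₀, hiK⟩)
        rw [hz, mul_zero, mul_zero]
    have hsplit : lcontr (ι ℝ (w i)) M = lcontr (ι ℝ h) M := by
      rw [← hha, map_add, map_add, LinearMap.add_apply, haM, add_zero]
    rw [hsplit, hR] at hL
    exact absurd hL.symm (mul_ne_zero (eps_ne_zero i y₀) hms₀)
  obtain ⟨t, htK, hmt⟩ := hMpure
  -- maximal cardinality outer support of N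
  set cand : Finset (Finset (Fin n)) := Finset.univ.filter
    (fun u => u ∩ K = ∅ ∧ innE N (wedgeOf ⇑w (K ∪ u)) ≠ 0) with hcand
  have hcne : cand.Nonempty := by
    have hys : ∃ y, innE N (wedgeOf ⇑w y) ≠ 0 := by
      by_contra hcon
      push_neg at hcon
      exact hN (innE_ext0 w innE hinn hcon)
    obtain ⟨y, hy⟩ := hys
    have hKy : K ⊆ y := by
      by_contra hns
      exact hy (hNcoeff y hns)
    refine ⟨y \ K, ?_⟩
    rw [hcand, Finset.mem_filter]
    refine ⟨Finset.mem_univ _, Finset.sdiff_inter_self K y, ?_⟩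
    rw [Finset.union_sdiff_of_subset hKy]
    exact hy
  obtain ⟨u₀, hu₀mem, hu₀max⟩ := Finset.exists_max_image cand Finset.card hcne
  rw [hcand, Finset.mem_filter] at hu₀mem
  have hu₀K : u₀ ∩ K = ∅ := hu₀mem.2.1
  have hn₀ : innE N (wedgeOf ⇑w (K ∪ u₀)) ≠ 0 := hu₀mem.2.2
  have hu₀K' : ∀ x, x ∈ u₀ → x ∉ K := by
    intro x hx hxK
    exact Finset.eq_empty_iff_forall_notMem.mp hu₀K x (Finset.mem_inter.mpr ⟨hx, hxK⟩)
  set Y : Finset (Fin n) := (K \ t) ∪ u₀ with hY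
  have hzero : innE N (M * wedgeOf ⇑w Y) = 0 := by
    rw [← hc M N (wedgeOf ⇑w Y), h0]
    simp
  have hexp : innE N (M * wedgeOf ⇑w Y) = ∑ s : Finset (Fin n),
      b.repr M s • innE N (wedgeOf ⇑w s * wedgeOf ⇑w Y) := by
    conv_lhs => rw [← b.sum_repr M]
    rw [Finset.sum_mul, map_sum]
    apply Finset.sum_congr rfl
    intro s _
    rw [smul_mul_assoc, map_smul, hb, wedgeBasis_apply]
  have htdisj : ∀ x ∈ t, x ∉ Y := by
    intro x hx hxY
    rw [hY, Finset.mem_union] at hxY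
    rcases hxY with hxY | hxY
    · exact (Finset.mem_sdiff.mp hxY).2 hx
    · exact hu₀K' x hxY (htK hx)
  have hterm : ∀ s : Finset (Fin n), s ≠ t →
      b.repr M s • innE N (wedgeOf ⇑w s * wedgeOf ⇑w Y) = 0 := by
    intro s hst
    obtain ⟨c, hmul, hc1, hc0⟩ := wedge_mul_wedge ⇑w s Y
    rw [hmul, map_smul]
    by_cases hd : ∀ x ∈ s, x ∉ Y
    · by_cases hcov : K ⊆ s ∪ Y
      · have htsub : t ⊆ s := by
          intro x hx
          have hxK : x ∈ K := htK hx
          rcases Finset.mem_union.mp (hcov hxK) with hxs | hxY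
          · exact hxs
          · exfalso
            rw [hY, Finset.mem_union] at hxY
            rcases hxY with hxY | hxY
            · exact (Finset.mem_sdiff.mp hxY).2 hx
            · exact hu₀K' x hxY hxK
        have hsKt : s ∩ K = t := by
          apply Finset.ext
          intro x
          constructor
          · intro hx
            obtain ⟨hxs, hxK⟩ := Finset.mem_inter.mp hx
            by_contra hxt
            apply hd x hxs
            rw [hY, Finset.mem_union]
            exact Or.inl (Finset.mem_sdiff.mpr ⟨hxK, hxt⟩)
          · intro hx
            exact Finset.mem_inter.mpr ⟨htsub hx, htK hx⟩
        by_cases hwild : s ⊆ K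
        · exfalso
          apply hst
          rw [← hsKt, Finset.inter_eq_left.mpr hwild]
        · obtain ⟨j, hjs, hjK⟩ := Finset.not_subset.mp hwild
          have hsy : s ∪ Y = K ∪ ((s \ K) ∪ u₀) := by
            apply Finset.ext
            intro x
            simp only [Finset.mem_union, Finset.mem_sdiff, hY]
            constructor
            · rintro (hxs | hxY | hxu)
              · by_cases hxK : x ∈ K
                · exact Or.inl hxK
                · exact Or.inr (Or.inl ⟨hxs, hxK⟩)
              · exact Or.inl hxY.1
              · exact Or.inr (Or.inr hxu)
            · rintro (hxK | ⟨hxs, _⟩ | hxu)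
              · by_cases hxt : x ∈ t
                · exact Or.inl (htsub hxt)
                · exact Or.inr (Or.inl ⟨hxK, hxt⟩)
              · exact Or.inl hxs
              · exact Or.inr (Or.inr hxu)
          have hkey : innE N (wedgeOf ⇑w (s ∪ Y)) = 0 := by
            rw [hsy]
            by_contra hne
            have hmem : (s \ K) ∪ u₀ ∈ cand := by
              rw [hcand, Finset.mem_filter]
              refine ⟨Finset.mem_univ _, ?_, hne⟩
              apply Finset.eq_empty_iff_forall_notMem.mpr
              intro x hx
              obtain ⟨hx1, hx2⟩ := Finset.mem_inter.mp hx
              rcases Finset.mem_union.mp hx1 with hx1 | hx1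
              · exact (Finset.mem_sdiff.mp hx1).2 hx2
              · exact hu₀K' x hx1 hx2
            have hcard := hu₀max _ hmem
            have hdisj : Disjoint (s \ K) u₀ := by
              rw [Finset.disjoint_left]
              intro x hx hxu
              exact hd x (Finset.mem_sdiff.mp hx).1
                (by rw [hY, Finset.mem_union]; exact Or.inr hxu)
            rw [Finset.card_union_of_disjoint hdisj] at hcard
            have hpos : 0 < (s \ K).card :=
              Finset.card_pos.mpr ⟨j, Finset.mem_sdiff.mpr ⟨hjs, hjK⟩⟩
            omega
          rw [hkey, smul_zero, smul_zero]
      · rw [hNcoeff _ hcov, smul_zero, smul_zero]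
    · rw [hc0 hd, zero_smul, smul_zero]
  have htotal : ∑ s : Finset (Fin n),
      b.repr M s • innE N (wedgeOf ⇑w s * wedgeOf ⇑w Y) = 0 := by
    rw [← hexp]
    exact hzero
  rw [Finset.sum_eq_single t (fun s _ hst => hterm s hst)
    (fun hnm => absurd (Finset.mem_univ t) hnm)] at htotal
  obtain ⟨c, hmul, hc1, hc0⟩ := wedge_mul_wedge ⇑w t Y
  rw [hmul, map_smul] at htotal
  have htY : t ∪ Y = K ∪ u₀ := by
    rw [hY, ← Finset.union_assoc, Finset.union_sdiff_of_subset htK]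
  rw [htY] at htotal
  have hreprt : b.repr M t ≠ 0 := by
    rw [hb, ← innE_coeff w innE hinn M t]
    exact hmt
  have hcne0 : c ≠ 0 := by
    rcases hc1 htdisj with h | h <;> rw [h] <;> norm_num
  rcases smul_eq_zero.mp htotal with h | h
  · exact hreprt h
  · rcases smul_eq_zero.mp h with h | h
    · exact hcne0 h
    · exact hn₀ h

end PartTwo
-- WORKMARK




end PPerp

/-- Partial orthogonality and vanishing of contractions. -/
theorem pperp_isp_osp {X : Type*} [NormedAddCommGroup X] [InnerProductSpace ℝ X]
    [FiniteDimensional ℝ X]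
    (innE : ExteriorAlgebra ℝ X →ₗ[ℝ] ExteriorAlgebra ℝ X →ₗ[ℝ] ℝ)
    (lcontr : ExteriorAlgebra ℝ X →ₗ[ℝ] ExteriorAlgebra ℝ X →ₗ[ℝ] ExteriorAlgebra ℝ X)
    (hinn : InnerOK innE) (hc : ContrOK innE lcontr)
    (M N : ExteriorAlgebra ℝ X) :
    ((osp lcontr N)ᗮ ⊓ isp M ≠ ⊥ → lcontr M N = 0) ∧
    (M ≠ 0 → N ≠ 0 → lcontr M N = 0 → (isp N)ᗮ ⊓ osp lcontr M ≠ ⊥) :=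
  ⟨fun hne => PPerp.part_one innE lcontr hinn hc M N hne,
   fun hM hN h0 => PPerp.part_two innE lcontr hinn hc M N hM hN h0⟩

end
end

section
/- Let B be a nonzero blade and M ∈ ⋀X. Then [B] ⊆ isp(M) if and only if M = B∧N for some N ∈ ⋀X. In that case, for each subspace V ⊆ X with X = [B] ⊕ V, there is exactly one N ∈ ⋀V such that M = B∧N. -/
/-!
Setup: `X` is a finite-dimensional real inner product space, `⋀X` its exterior
algebra.  We hypothesize a bilinear form `innE` on the exterior algebra which makes
the wedges of any orthonormal basis of `X` (over increasing index sets) orthonormal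
— this characterizes the inner product of the paper — and a bilinear left
contraction `lcontr` adjoint to the wedge product: `⟨M⌟N, L⟩ = ⟨N, M∧L⟩`.
-/

noncomputable section

open ExteriorAlgebra

/-- The exterior product `v₁ ∧ ⋯ ∧ v_p` of a tuple of vectors. -/
def bladeOf {X : Type*} [AddCommGroup X] [Module ℝ X] {p : ℕ}
    (f : Fin p → X) : ExteriorAlgebra ℝ X :=
  (List.ofFn fun i => ι ℝ (f i)).prod

namespace BladeFactorAux

open ExteriorAlgebra

variable {X : Type*} [AddCommGroup X] [Module ℝ X]

lemma bladeOf_nil (f : Fin 0 → X) : bladeOf f = 1 := by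
  simp [bladeOf]

lemma bladeOf_succ {p : ℕ} (f : Fin (p + 1) → X) :
    bladeOf f = ι ℝ (f 0) * bladeOf (Fin.tail f) := by
  simp [bladeOf, List.ofFn_succ, Fin.tail]

lemma bladeOf_cons {k : ℕ} (x : X) (h : Fin k → X) :
    bladeOf (Fin.cons x h) = ι ℝ x * bladeOf h := by
  rw [bladeOf_succ]
  simp [Fin.tail_cons]

lemma bladeOf_eq_iMulti {p : ℕ} (f : Fin p → X) : bladeOf f = ιMulti ℝ p f :=
  (ιMulti_apply f).symm

lemma bladeOf_append {p q : ℕ} (f : Fin p → X) (g : Fin q → X) :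
    bladeOf (Fin.append f g) = bladeOf f * bladeOf g := by
  unfold bladeOf
  rw [show (List.ofFn fun i => ι ℝ (Fin.append f g i)) = List.ofFn (fun i => ι ℝ (f i)) ++
      List.ofFn (fun i => ι ℝ (g i)) by
    rw [← List.ofFn_fin_append]
    congr 1
    funext i
    refine Fin.addCases (fun i => ?_) (fun i => ?_) i <;>
      simp [Fin.append_left, Fin.append_right], List.prod_append]

lemma ι_mul_bladeOf_self {p : ℕ} (f : Fin p → X) (i : Fin p) :
    ι ℝ (f i) * bladeOf f = 0 :=
  ι_mul_prod_list f i

lemma blade_mul_blade_comp {p k : ℕ} (f : Fin p → X) (g : Fin (k + 1) → Fin p) :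
    bladeOf f * bladeOf (f ∘ g) = 0 := by
  rw [← bladeOf_append, bladeOf_eq_iMulti]
  refine AlternatingMap.map_eq_zero_of_eq _ _
    (show Fin.append f (f ∘ g) (Fin.castAdd _ (g 0)) = Fin.append f (f ∘ g) (Fin.natAdd p 0) by
      rw [Fin.append_left, Fin.append_right]; rfl) ?_
  intro hcon
  have := congrArg Fin.val hcon
  simp only [Fin.coe_castAdd, Fin.coe_natAdd] at this
  have := (g 0).isLt
  omega

lemma ι_mul_bladeOf_swap {k : ℕ} (x : X) (h : Fin k → X) :
    ι ℝ x * bladeOf h = ((-1 : ℝ)) ^ k • (bladeOf h * ι ℝ x) := by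
  induction k with
  | zero => simp [bladeOf_nil]
  | succ k ih =>
    have hxh : ι ℝ x * ι ℝ (h 0) = -(ι ℝ (h 0) * ι ℝ x) :=
      eq_neg_of_add_eq_zero_left (ι_add_mul_swap x (h 0))
    rw [bladeOf_succ, ← mul_assoc, hxh, neg_mul, mul_assoc, ih (Fin.tail h),
      mul_smul_comm, ← smul_neg, pow_succ, mul_comm ((-1:ℝ)^k) (-1), mul_smul,
      neg_one_smul, smul_neg, mul_assoc]

lemma mem_extSub_of_mem {U : Submodule ℝ X} {v : X} (hv : v ∈ U) :
    ι ℝ v ∈ extSub U :=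
  Algebra.subset_adjoin ⟨v, hv, rfl⟩

lemma extSub_mono {U U' : Submodule ℝ X} (h : U ≤ U') : extSub U ≤ extSub U' :=
  Algebra.adjoin_mono (Set.image_mono h)

lemma bladeOf_mem_extSub {k : ℕ} {U : Submodule ℝ X} (h : Fin k → X)
    (hh : ∀ i, h i ∈ U) : bladeOf h ∈ extSub U := by
  refine Subalgebra.list_prod_mem _ ?_
  intro a ha
  rw [List.mem_ofFn] at ha
  obtain ⟨i, rfl⟩ := ha
  exact mem_extSub_of_mem (hh i)

lemma contract_eq_zero (φ : Module.Dual ℝ X) (U : Submodule ℝ X)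
    (hφ : ∀ u ∈ U, φ u = 0) {z : ExteriorAlgebra ℝ X} (hz : z ∈ extSub U) :
    CliffordAlgebra.contractLeft φ z = 0 := by
  have key : ∀ z : ExteriorAlgebra ℝ X, z ∈ extSub U →
      ∀ y : ExteriorAlgebra ℝ X, CliffordAlgebra.contractLeft φ y = 0 →
      CliffordAlgebra.contractLeft φ (z * y) = 0 := by
    intro z hz
    induction hz using Algebra.adjoin_induction with
    | mem v hv =>
      obtain ⟨u, hu, rfl⟩ := hv
      intro y hy
      rw [CliffordAlgebra.contractLeft_ι_mul, hy, mul_zero, sub_zero, hφ u hu, zero_smul]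
    | algebraMap r =>
      intro y hy
      rw [← Algebra.smul_def, map_smul, hy, smul_zero]
    | add a b ha hb iha ihb =>
      intro y hy
      rw [add_mul, map_add, iha y hy, ihb y hy, add_zero]
    | mul a b ha hb iha ihb =>
      intro y hy
      rw [mul_assoc]
      exact iha _ (ihb y hy)
  have h1 : CliffordAlgebra.contractLeft φ (1 : ExteriorAlgebra ℝ X) = 0 := by
    simpa using CliffordAlgebra.contractLeft_one (0 : QuadraticForm ℝ X) φ
  have := key z hz 1 h1
  rwa [mul_one] at this

lemma exists_factor :
    ∀ {p : ℕ} (f : Fin p → X) (φ : Fin p → Module.Dual ℝ X),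
      (∀ i j, φ i (f j) = if i = j then 1 else 0) →
      ∀ M : ExteriorAlgebra ℝ X, (∀ i, ι ℝ (f i) * M = 0) →
        ∃ N, M = bladeOf f * N := by
  intro p
  induction p with
  | zero =>
    intro f φ hφ M hM
    exact ⟨M, by rw [bladeOf_nil, one_mul]⟩
  | succ p ih =>
    intro f φ hφ M hM
    set M₁ := CliffordAlgebra.contractLeft (φ 0) M with hM₁
    have h0 : ∀ i : Fin (p + 1),
        (0 : ExteriorAlgebra ℝ X) = (φ 0) (f i) • M - ι ℝ (f i) * M₁ := by
      intro i
      rw [hM₁, ← CliffordAlgebra.contractLeft_ι_mul, hM i, map_zero]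
    have hMeq : M = ι ℝ (f 0) * M₁ := by
      have := h0 0
      rw [hφ 0 0, if_pos rfl, one_smul] at this
      exact (sub_eq_zero.mp this.symm)
    have htail : ∀ i : Fin p, ι ℝ (Fin.tail f i) * M₁ = 0 := by
      intro i
      have := h0 i.succ
      rw [hφ 0 i.succ, if_neg (Fin.succ_ne_zero i).symm, zero_smul, zero_sub] at this
      exact neg_eq_zero.mp this.symm
    obtain ⟨N, hN⟩ := ih (Fin.tail f) (fun i => φ i.succ)
      (by
        intro i j
        show φ i.succ (f j.succ) = _
        rw [hφ i.succ j.succ]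
        simp [Fin.succ_inj])
      M₁ htail
    exact ⟨N, by rw [hMeq, hN, bladeOf_succ, mul_assoc]⟩

lemma factor_inj (V : Submodule ℝ X) :
    ∀ {p : ℕ} (f : Fin p → X) (φ : Fin p → Module.Dual ℝ X),
      (∀ i j, φ i (f j) = if i = j then 1 else 0) →
      (∀ i, ∀ v ∈ V, φ i v = 0) →
      ∀ N₁ N₂ : ExteriorAlgebra ℝ X, N₁ ∈ extSub V → N₂ ∈ extSub V →
        bladeOf f * N₁ = bladeOf f * N₂ → N₁ = N₂ := by
  intro p
  induction p with
  | zero =>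
    intro f φ hφ hφV N₁ N₂ h₁ h₂ h
    simpa [bladeOf_nil] using h
  | succ p ih =>
    intro f φ hφ hφV N₁ N₂ h₁ h₂ h
    set U : Submodule ℝ X := Submodule.span ℝ (Set.range (Fin.tail f)) ⊔ V with hU
    have hU0 : ∀ u ∈ U, (φ 0) u = 0 := by
      have : U ≤ LinearMap.ker (φ 0) := by
        rw [hU, sup_le_iff]
        constructor
        · rw [Submodule.span_le]
          rintro x ⟨j, rfl⟩
          have := hφ 0 j.succ
          rw [if_neg (Fin.succ_ne_zero j).symm] at this
          exact this
        · intro v hv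
          exact hφV 0 v hv
      exact fun u hu => this hu
    have hmemT : ∀ N ∈ extSub V, bladeOf (Fin.tail f) * N ∈ extSub U := by
      intro N hN
      refine mul_mem (bladeOf_mem_extSub _ ?_) (extSub_mono le_sup_right hN)
      intro i
      exact Submodule.mem_sup_left (Submodule.subset_span ⟨i, rfl⟩)
    have hkey : bladeOf (Fin.tail f) * N₁ = bladeOf (Fin.tail f) * N₂ := by
      have hc := congrArg (CliffordAlgebra.contractLeft (φ 0)) h
      rw [bladeOf_succ, mul_assoc, mul_assoc] at hc
      rw [CliffordAlgebra.contractLeft_ι_mul, CliffordAlgebra.contractLeft_ι_mul,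
        contract_eq_zero (φ 0) U hU0 (hmemT N₁ h₁),
        contract_eq_zero (φ 0) U hU0 (hmemT N₂ h₂),
        mul_zero, sub_zero, sub_zero, hφ 0 0, if_pos rfl, one_smul, one_smul] at hc
      exact hc
    exact ih (Fin.tail f) (fun i => φ i.succ)
      (by
        intro i j
        show φ i.succ (f j.succ) = _
        rw [hφ i.succ j.succ]
        simp [Fin.succ_inj])
      (fun i v hv => hφV i.succ v hv) N₁ N₂ h₁ h₂ hkey

lemma exists_in_extSub {p : ℕ} (f : Fin p → X) (V : Submodule ℝ X)
    (hV : Submodule.span ℝ (Set.range f) ⊔ V = ⊤) (N₀ : ExteriorAlgebra ℝ X) :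
    ∃ N ∈ extSub V, bladeOf f * N₀ = bladeOf f * N := by
  set G : Set (ExteriorAlgebra ℝ X) :=
    {z | ∃ (k : ℕ) (g : Fin k → Fin p) (n : ExteriorAlgebra ℝ X),
      n ∈ extSub V ∧ z = bladeOf (f ∘ g) * n} with hG
  set P := Submodule.span ℝ G with hP
  have hgen : ∀ z ∈ G, ∀ x : X, ι ℝ x * z ∈ P := by
    rintro z ⟨k, g, n, hn, rfl⟩ x
    have hx : x ∈ Submodule.span ℝ (Set.range f) ⊔ V := by rw [hV]; trivial
    obtain ⟨a, ha, b, hb, rfl⟩ := Submodule.mem_sup.mp hx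
    rw [map_add, add_mul]
    refine add_mem ?_ ?_
    · -- a ∈ span (range f)
      have hQ : Submodule.span ℝ (Set.range f) ≤
          Submodule.comap ((LinearMap.mulRight ℝ (bladeOf (f ∘ g) * n)).comp (ι ℝ)) P := by
        rw [Submodule.span_le]
        rintro x ⟨i, rfl⟩
        refine Submodule.mem_comap.mpr ?_
        show ι ℝ (f i) * (bladeOf (f ∘ g) * n) ∈ P
        have : ι ℝ (f i) * (bladeOf (f ∘ g) * n) = bladeOf (f ∘ Fin.cons i g) * n := by
          rw [show f ∘ Fin.cons i g = Fin.cons (f i) (f ∘ g) by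
              funext j
              refine Fin.cases ?_ (fun j => ?_) j <;> simp,
            bladeOf_cons, mul_assoc]
        rw [this]
        exact Submodule.subset_span ⟨k + 1, Fin.cons i g, n, hn, rfl⟩
      have := hQ ha
      simpa [mul_assoc] using this
    · -- b ∈ V
      have : ι ℝ b * (bladeOf (f ∘ g) * n) =
          ((-1 : ℝ)) ^ k • (bladeOf (f ∘ g) * (ι ℝ b * n)) := by
        rw [← mul_assoc, ι_mul_bladeOf_swap, smul_mul_assoc, mul_assoc]
      rw [this]
      exact Submodule.smul_mem _ _ (Submodule.subset_span
        ⟨k, g, ι ℝ b * n, mul_mem (mem_extSub_of_mem hb) hn, rfl⟩)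
  have hPclosed : ∀ y ∈ P, ∀ x : X, ι ℝ x * y ∈ P := by
    intro y hy x
    have : P ≤ Submodule.comap (LinearMap.mulLeft ℝ (ι ℝ x)) P := by
      rw [hP, Submodule.span_le]
      intro z hz
      exact hgen z hz x
    simpa using this hy
  have h1 : (1 : ExteriorAlgebra ℝ X) ∈ P :=
    Submodule.subset_span ⟨0, Fin.elim0, 1, one_mem _, by rw [bladeOf_nil, one_mul]⟩
  have htop : ∀ z : ExteriorAlgebra ℝ X, z ∈ P := by
    have hmul : ∀ z : ExteriorAlgebra ℝ X, ∀ y ∈ P, z * y ∈ P := by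
      intro z
      induction z using CliffordAlgebra.induction with
      | algebraMap r =>
        intro y hy
        rw [← Algebra.smul_def]
        exact Submodule.smul_mem _ _ hy
      | ι x => exact fun y hy => hPclosed y hy x
      | mul a b ha hb =>
        intro y hy
        rw [mul_assoc]
        exact ha _ (hb _ hy)
      | add a b ha hb =>
        intro y hy
        rw [add_mul]
        exact add_mem (ha y hy) (hb y hy)
    intro z
    simpa using hmul z 1 h1
  have hZ : P ≤ Submodule.comap (LinearMap.mulLeft ℝ (bladeOf f))
      ((Subalgebra.toSubmodule (extSub V)).map (LinearMap.mulLeft ℝ (bladeOf f))) := by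
    rw [hP, Submodule.span_le]
    rintro z ⟨k, g, n, hn, rfl⟩
    cases k with
    | zero =>
      refine ⟨n, hn, ?_⟩
      simp [bladeOf_nil]
    | succ k =>
      refine ⟨0, zero_mem _, ?_⟩
      simp only [LinearMap.mulLeft_apply, mul_zero]
      rw [← mul_assoc, blade_mul_blade_comp, zero_mul]
  obtain ⟨n, hn, heq⟩ := hZ (htop N₀)
  exact ⟨n, hn, by simpa using heq.symm⟩

end BladeFactorAux

open BladeFactorAux in
/-- A nonzero blade `B = c • (v₁ ∧ ⋯ ∧ v_p)` satisfies
`[B] ⊆ isp M` iff `M = B ∧ N` for some `N`, and given a complement `V` of `[B]`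
in `X` such an `N` can be chosen uniquely in `⋀V`. -/
theorem inner_blade_factorization {X : Type*} [NormedAddCommGroup X]
    [InnerProductSpace ℝ X] [FiniteDimensional ℝ X]
    (p : ℕ) (f : Fin p → X) (c : ℝ) (B : ExteriorAlgebra ℝ X)
    (hB : B = c • bladeOf f) (hB0 : B ≠ 0) (M : ExteriorAlgebra ℝ X) :
    (Submodule.span ℝ (Set.range f) ≤ isp M ↔ ∃ N, M = B * N) ∧
    (Submodule.span ℝ (Set.range f) ≤ isp M →
      ∀ V : Submodule ℝ X, IsCompl (Submodule.span ℝ (Set.range f)) V →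
        ∃! N : ExteriorAlgebra ℝ X, N ∈ extSub V ∧ M = B * N) := by
  classical
  have hc : c ≠ 0 := by
    rintro rfl
    exact hB0 (by rw [hB, zero_smul])
  have hblade : bladeOf f ≠ 0 := fun h => hB0 (by rw [hB, h, smul_zero])
  have hf : LinearIndependent ℝ f := by
    by_contra h
    exact hblade (by
      rw [bladeOf_eq_iMulti]
      exact AlternatingMap.map_linearDependent _ f h)
  have back : ∀ N : ExteriorAlgebra ℝ X,
      Submodule.span ℝ (Set.range f) ≤ isp (B * N) := by
    intro N
    rw [Submodule.span_le]
    rintro x ⟨i, rfl⟩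
    show ι ℝ (f i) * (B * N) = 0
    rw [hB, smul_mul_assoc, mul_smul_comm, ← mul_assoc, ι_mul_bladeOf_self f i, zero_mul,
      smul_zero]
  have main : ∀ V : Submodule ℝ X, IsCompl (Submodule.span ℝ (Set.range f)) V →
      Submodule.span ℝ (Set.range f) ≤ isp M →
      ∃! N : ExteriorAlgebra ℝ X, N ∈ extSub V ∧ M = B * N := by
    intro V hV hsub
    set W := Submodule.span ℝ (Set.range f) with hW
    let b := Module.Basis.span hf
    let proj := W.linearProjOfIsCompl V hV
    let φ : Fin p → Module.Dual ℝ X := fun i => (b.coord i).comp proj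
    have hφ : ∀ i j, φ i (f j) = if i = j then 1 else 0 := by
      intro i j
      have hfj : f j ∈ W := Submodule.subset_span ⟨j, rfl⟩
      have h1 : proj (f j) = b j := by
        have h2 : proj ((⟨f j, hfj⟩ : W) : X) = ⟨f j, hfj⟩ :=
          Submodule.linearProjOfIsCompl_apply_left hV ⟨f j, hfj⟩
        exact h2.trans (Module.Basis.span_apply hf j).symm
      simp only [φ, LinearMap.coe_comp, Function.comp_apply, h1, Module.Basis.coord_apply,
        Module.Basis.repr_self, Finsupp.single_apply]
      by_cases hij : i = j <;> simp [hij, eq_comm]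
    have hφV : ∀ i, ∀ v ∈ V, φ i v = 0 := by
      intro i v hv
      simp [φ, proj, Submodule.linearProjOfIsCompl, Submodule.linearProjOfIsCompl_apply_right' hV hv]
    have hMι : ∀ i, ι ℝ (f i) * M = 0 := fun i => hsub (Submodule.subset_span ⟨i, rfl⟩)
    obtain ⟨N₀, hN₀⟩ := exists_factor f φ hφ M hMι
    obtain ⟨N, hN, heq⟩ := exists_in_extSub f V (codisjoint_iff.mp hV.codisjoint) N₀
    have hMN : M = bladeOf f * N := hN₀.trans heq
    have hBN : B * (c⁻¹ • N) = bladeOf f * N := by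
      rw [hB, smul_mul_assoc, mul_smul_comm, smul_smul, mul_inv_cancel₀ hc, one_smul]
    refine ⟨c⁻¹ • N, ⟨Subalgebra.smul_mem _ hN _, by rw [hBN]; exact hMN⟩, ?_⟩
    rintro N' ⟨hN', hMN'⟩
    refine factor_inj V f φ hφ hφV N' (c⁻¹ • N) hN' (Subalgebra.smul_mem _ hN _) ?_
    have hBeq : B * N' = B * (c⁻¹ • N) := by rw [← hMN', hBN, ← hMN]
    have : c • (bladeOf f * N') = c • (bladeOf f * (c⁻¹ • N)) := by
      rw [← smul_mul_assoc, ← smul_mul_assoc, ← hB]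
      exact hBeq
    exact smul_right_injective _ hc this
  refine ⟨⟨fun hsub => ?_, ?_⟩, fun hsub V hV => main V hV hsub⟩
  · obtain ⟨V, hV⟩ := Submodule.exists_isCompl (Submodule.span ℝ (Set.range f))
    obtain ⟨N, ⟨-, hN⟩, -⟩ := main V hV hsub
    exact ⟨N, hN⟩
  · rintro ⟨N, rfl⟩
    exact back N

end
end
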